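/- arXiv:2301.12379 — 5 statements merged into one kernel-verified Lean document; each statement's English description precedes it below -/
import Mathlib

section
/- Let E be a complete real inner product space, f : E → ℝ differentiable and L-smooth, and w > 0, S > 0 real constants. Define h : E → ℝ by h(θ) = w·exp(−f(θ)) / (w·exp(−f(θ)) + S). Then for all θ_x, θ_y ∈ E, ‖∇h(θ_x) − ∇h(θ_y)‖ ≤ (L/4)·‖θ_x − θ_y‖ + (1/4)·‖∇f(θ_y)‖. -/
theorem stmt_3 {E : Type*} [NormedAddCommGroup E] [InnerProductSpace ℝ E] [CompleteSpace E]
    (f : E → ℝ) (hf : Differentiable ℝ f) (L : ℝ)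
    (hsmooth : ∀ a b : E, ‖gradient f a - gradient f b‖ ≤ L * ‖a - b‖)
    (w S : ℝ) (hw : 0 < w) (hS : 0 < S)
    (h : E → ℝ)
    (hh : ∀ θ, h θ = w * Real.exp (-(f θ)) / (w * Real.exp (-(f θ)) + S)) :
    ∀ θx θy : E,
      ‖gradient h θx - gradient h θy‖ ≤
        (L / 4) * ‖θx - θy‖ + (1 / 4) * ‖gradient f θy‖ := by
  -- the scalar factor
  set c : E → ℝ := fun θ => -(w * Real.exp (-(f θ)) * S / (w * Real.exp (-(f θ)) + S) ^ 2)
    with hc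
  have hupos : ∀ θ : E, 0 < w * Real.exp (-(f θ)) := fun θ =>
    mul_pos hw (Real.exp_pos _)
  have hdenpos : ∀ θ : E, 0 < w * Real.exp (-(f θ)) + S := fun θ => by
    have := hupos θ; linarith
  have hcle : ∀ θ : E, c θ ≤ 0 := by
    intro θ
    have h1 := hupos θ
    have h2 := (hdenpos θ)
    have : 0 ≤ w * Real.exp (-(f θ)) * S / (w * Real.exp (-(f θ)) + S) ^ 2 :=
      div_nonneg (by positivity) (by positivity)
    simp only [hc]; linarith
  have hcge : ∀ θ : E, -(1/4 : ℝ) ≤ c θ := by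
    intro θ
    set u := w * Real.exp (-(f θ)) with hu
    have h1 : 0 < u := hupos θ
    have hd : 0 < (u + S) ^ 2 := by positivity
    have key : u * S / (u + S) ^ 2 ≤ 1/4 := by
      rw [div_le_iff₀ hd]
      nlinarith [sq_nonneg (u - S)]
    simp only [hc]
    linarith
  -- gradient formula
  have hgrad : ∀ θ : E, gradient h θ = c θ • gradient f θ := by
    intro θ
    set e := Real.exp (-(f θ)) with he
    have hden : w * e + S ≠ 0 := ne_of_gt (hdenpos θ)
    -- derivative of the scalar function φ
    have hexp : HasDerivAt (fun t : ℝ => Real.exp (-t)) (-Real.exp (-(f θ))) (f θ) := by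
      simpa [Function.comp_def] using (Real.hasDerivAt_exp (-(f θ))).comp (f θ) ((hasDerivAt_id (f θ)).neg)
    have hnum : HasDerivAt (fun t : ℝ => w * Real.exp (-t)) (w * -Real.exp (-(f θ))) (f θ) :=
      hexp.const_mul w
    have hdenom : HasDerivAt (fun t : ℝ => w * Real.exp (-t) + S) (w * -Real.exp (-(f θ))) (f θ) :=
      hnum.add_const S
    have hφ : HasDerivAt (fun t : ℝ => w * Real.exp (-t) / (w * Real.exp (-t) + S))
        ((w * -e * (w * e + S) - w * e * (w * -e)) / (w * e + S) ^ 2) (f θ) :=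
      hnum.div hdenom hden
    have hval : (w * -e * (w * e + S) - w * e * (w * -e)) / (w * e + S) ^ 2 = c θ := by
      simp only [hc, ← he]
      field_simp
      ring
    rw [hval] at hφ
    have hgf : HasGradientAt f (gradient f θ) θ := (hf θ).hasGradientAt
    have hF : HasFDerivAt f ((InnerProductSpace.toDual ℝ E) (gradient f θ)) θ :=
      hgf.hasFDerivAt
    have hcomp : HasFDerivAt h (c θ • (InnerProductSpace.toDual ℝ E) (gradient f θ)) θ := by
      have : HasFDerivAt (fun θ' => w * Real.exp (-(f θ')) / (w * Real.exp (-(f θ')) + S))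
          (c θ • (InnerProductSpace.toDual ℝ E) (gradient f θ)) θ :=
        hφ.comp_hasFDerivAt θ hF
      have hfun : h = fun θ' => w * Real.exp (-(f θ')) / (w * Real.exp (-(f θ')) + S) :=
        funext hh
      rw [hfun]; exact this
    have : HasGradientAt h (c θ • gradient f θ) θ := by
      rw [hasGradientAt_iff_hasFDerivAt, map_smul]
      exact hcomp
    exact this.gradient
  intro θx θy
  rw [hgrad θx, hgrad θy]
  obtain ⟨ax, hax⟩ : ∃ a, c θx = a := ⟨_, rfl⟩
  obtain ⟨ay, hay⟩ : ∃ a, c θy = a := ⟨_, rfl⟩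
  have hax1 : ax ≤ 0 := hax ▸ hcle θx
  have hax2 : -(1/4 : ℝ) ≤ ax := hax ▸ hcge θx
  have hay1 : ay ≤ 0 := hay ▸ hcle θy
  have hay2 : -(1/4 : ℝ) ≤ ay := hay ▸ hcge θy
  rw [hax, hay]
  have key : ax • gradient f θx - ay • gradient f θy =
      ax • (gradient f θx - gradient f θy) + (ax - ay) • gradient f θy := by
    rw [smul_sub, sub_smul]; abel
  rw [key]
  have h1 : ‖ax • (gradient f θx - gradient f θy)‖ ≤ (L / 4) * ‖θx - θy‖ := by
    rw [norm_smul, Real.norm_eq_abs]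
    have hca : |ax| ≤ 1/4 := abs_le.2 ⟨hax2, by linarith⟩
    have := hsmooth θx θy
    have hn : (0:ℝ) ≤ ‖gradient f θx - gradient f θy‖ := norm_nonneg _
    calc ‖ax‖ * ‖gradient f θx - gradient f θy‖
        ≤ (1/4) * (L * ‖θx - θy‖) := by
          apply mul_le_mul hca this hn (by norm_num)
      _ = (L / 4) * ‖θx - θy‖ := by ring
  have h2 : ‖(ax - ay) • gradient f θy‖ ≤ (1/4) * ‖gradient f θy‖ := by
    rw [norm_smul, Real.norm_eq_abs]
    have hab : |ax - ay| ≤ 1/4 := by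
      rw [abs_le]; constructor <;> linarith
    exact mul_le_mul_of_nonneg_right hab (norm_nonneg _)
  calc ‖ax • (gradient f θx - gradient f θy) + (ax - ay) • gradient f θy‖
      ≤ ‖ax • (gradient f θx - gradient f θy)‖ + ‖(ax - ay) • gradient f θy‖ :=
        norm_add_le _ _
    _ ≤ (L / 4) * ‖θx - θy‖ + (1 / 4) * ‖gradient f θy‖ := add_le_add h1 h2
end

section
/- Let E be a complete real inner product space, f : E → ℝ differentiable and L-smooth, and w > 0, S > 0 real constants. Define h : E → ℝ by h(θ) = w·exp(−f(θ)) / (w·exp(−f(θ)) + S). Then for all θ_x, θ_y ∈ E, |h(θ_x) − h(θ_y)| ≤ (L/8)·‖θ_x − θ_y‖² + (3/8)·‖∇f(θ_y)‖·‖θ_x − θ_y‖. -/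
open Real Set

lemma descent_aux {E : Type*} [NormedAddCommGroup E] [InnerProductSpace ℝ E] [CompleteSpace E]
    (f : E → ℝ) (hf : Differentiable ℝ f) (L : ℝ)
    (hsmooth : ∀ a b : E, ‖gradient f a - gradient f b‖ ≤ L * ‖a - b‖)
    (x y : E) (ε : ℝ) (hε : ε = 1 ∨ ε = -1) :
    ε * (f x - f y - @inner ℝ _ _ (gradient f y) (x - y)) ≤ L / 2 * ‖x - y‖ ^ 2 := by
  set d := x - y with hd
  set c : ℝ := @inner ℝ _ _ (gradient f y) d with hc
  set φ : ℝ → ℝ := fun t => ε * (f (y + t • d) - t * c) - L / 2 * t ^ 2 * ‖d‖ ^ 2 with hφ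
  have hline : ∀ t : ℝ, HasDerivAt (fun s : ℝ => y + s • d) d t := by
    intro t
    simpa using ((hasDerivAt_id t).smul_const d).const_add y
  have hg : ∀ t : ℝ, HasDerivAt (fun s : ℝ => f (y + s • d))
      (@inner ℝ _ _ (gradient f (y + t • d)) d) t := by
    intro t
    have := ((hf (y + t • d)).hasGradientAt.hasFDerivAt).comp_hasDerivAt t (hline t)
    exact this.congr_deriv (by simp)
  have hφ' : ∀ t : ℝ, HasDerivAt φ
      (ε * (@inner ℝ _ _ (gradient f (y + t • d)) d - c) - L * t * ‖d‖ ^ 2) t := by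
    intro t
    have h1 : HasDerivAt (fun s : ℝ => f (y + s • d) - s * c)
        (@inner ℝ _ _ (gradient f (y + t • d)) d - c) t :=
      (hg t).sub (by simpa using (hasDerivAt_id t).mul_const c)
    have h2 : HasDerivAt (fun s : ℝ => L / 2 * s ^ 2 * ‖d‖ ^ 2) (L * t * ‖d‖ ^ 2) t := by
      have := ((hasDerivAt_pow 2 t).const_mul (L / 2)).mul_const (‖d‖ ^ 2)
      exact this.congr_deriv (by simp only [Nat.reduceSub, pow_one, Nat.cast_ofNat]; ring)
    exact (h1.const_mul ε).sub h2
  have hmono : AntitoneOn φ (Icc 0 1) := by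
    apply antitoneOn_of_deriv_nonpos (convex_Icc 0 1)
    · exact fun t _ => ((hφ' t).continuousAt).continuousWithinAt
    · exact fun t _ => ((hφ' t).differentiableAt).differentiableWithinAt
    · intro t ht
      rw [interior_Icc] at ht
      rw [(hφ' t).deriv]
      have hb : ε * (@inner ℝ _ _ (gradient f (y + t • d)) d - c) ≤ L * t * ‖d‖ ^ 2 := by
        have h3 : ε * (@inner ℝ _ _ (gradient f (y + t • d)) d - c)
            = @inner ℝ _ _ (gradient f (y + t • d) - gradient f y) (ε • d) := by
          rw [inner_sub_left, real_inner_smul_right, real_inner_smul_right, hc]; ring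
        rw [h3]
        calc @inner ℝ _ _ (gradient f (y + t • d) - gradient f y) (ε • d)
            ≤ ‖gradient f (y + t • d) - gradient f y‖ * ‖ε • d‖ :=
              real_inner_le_norm _ _
          _ ≤ (L * ‖(y + t • d) - y‖) * ‖ε • d‖ := by
              apply mul_le_mul_of_nonneg_right (hsmooth _ _) (norm_nonneg _)
          _ = L * t * ‖d‖ ^ 2 := by
              rcases hε with h | h <;>
              · rw [norm_smul, h]
                simp [abs_of_pos ht.1, norm_smul]
                ring
      linarith
  have h0 : φ 1 ≤ φ 0 := hmono (by norm_num) (by norm_num) zero_le_one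
  have e1 : φ 1 = ε * (f x - c) - L / 2 * ‖d‖ ^ 2 := by
    simp [hφ, hd]
  have e0 : φ 0 = ε * f y := by
    simp [hφ]
  rw [e1, e0] at h0
  rcases hε with hE | hE <;> rw [hE] at h0 ⊢ <;> simp only [hc, hd] at h0 ⊢ <;> linarith

lemma descent {E : Type*} [NormedAddCommGroup E] [InnerProductSpace ℝ E] [CompleteSpace E]
    (f : E → ℝ) (hf : Differentiable ℝ f) (L : ℝ)
    (hsmooth : ∀ a b : E, ‖gradient f a - gradient f b‖ ≤ L * ‖a - b‖)
    (x y : E) :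
    |f x - f y - @inner ℝ _ _ (gradient f y) (x - y)| ≤ L / 2 * ‖x - y‖ ^ 2 := by
  rw [abs_le]
  constructor
  · have := descent_aux f hf L hsmooth x y (-1) (Or.inr rfl)
    linarith
  · have := descent_aux f hf L hsmooth x y 1 (Or.inl rfl)
    linarith

lemma sigmoid_lip (w S : ℝ) (hw : 0 < w) (hS : 0 < S) (a b : ℝ) :
    |w * Real.exp (-a) / (w * Real.exp (-a) + S) - w * Real.exp (-b) / (w * Real.exp (-b) + S)|
      ≤ 1 / 4 * |a - b| := by
  set φ : ℝ → ℝ := fun t => w * Real.exp (-t) / (w * Real.exp (-t) + S) with hφdef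
  have hpos : ∀ t : ℝ, 0 < w * Real.exp (-t) + S := fun t =>
    add_pos (mul_pos hw (Real.exp_pos _)) hS
  have hφ' : ∀ t : ℝ, HasDerivAt φ
      (-(w * Real.exp (-t)) * S / (w * Real.exp (-t) + S) ^ 2) t := by
    intro t
    have hn : HasDerivAt (fun s : ℝ => w * Real.exp (-s)) (-(w * Real.exp (-t))) t := by
      have := (Real.hasDerivAt_exp (-t)).comp t (hasDerivAt_neg t)
      simpa [mul_comm] using this.const_mul w
    have hden : HasDerivAt (fun s : ℝ => w * Real.exp (-s) + S) (-(w * Real.exp (-t))) t :=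
      hn.add_const S
    have := hn.div hden (ne_of_gt (hpos t))
    exact this.congr_deriv (by ring)
  have hbound : ∀ t : ℝ, ‖-(w * Real.exp (-t)) * S / (w * Real.exp (-t) + S) ^ 2‖ ≤ 1 / 4 := by
    intro t
    set u := w * Real.exp (-t) with hu
    have hu0 : 0 < u := mul_pos hw (Real.exp_pos _)
    rw [Real.norm_eq_abs, abs_div, abs_of_pos (pow_pos (hpos t) 2)]
    rw [div_le_iff₀ (pow_pos (hpos t) 2)]
    have : |(-u) * S| = u * S := by
      rw [abs_of_nonpos (by nlinarith)]; ring
    rw [this]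
    nlinarith [sq_nonneg (u - S)]
  have key : ‖φ a - φ b‖ ≤ 1 / 4 * ‖a - b‖ := by
    apply Convex.norm_image_sub_le_of_norm_hasDerivWithin_le
      (f' := fun t => -(w * Real.exp (-t)) * S / (w * Real.exp (-t) + S) ^ 2)
      (fun t _ => (hφ' t).hasDerivWithinAt) (fun t _ => hbound t) convex_univ
      (mem_univ b) (mem_univ a)
  simpa [Real.norm_eq_abs] using key

theorem stmt_5 {E : Type*} [NormedAddCommGroup E] [InnerProductSpace ℝ E] [CompleteSpace E]
    (f : E → ℝ) (hf : Differentiable ℝ f) (L : ℝ)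
    (hsmooth : ∀ a b : E, ‖gradient f a - gradient f b‖ ≤ L * ‖a - b‖)
    (w S : ℝ) (hw : 0 < w) (hS : 0 < S)
    (h : E → ℝ)
    (hh : ∀ θ, h θ = w * Real.exp (-(f θ)) / (w * Real.exp (-(f θ)) + S)) :
    ∀ θx θy : E,
      |h θx - h θy| ≤
        (L / 8) * ‖θx - θy‖ ^ 2 + (3 / 8) * ‖gradient f θy‖ * ‖θx - θy‖ := by
  intro x y
  rw [hh x, hh y]
  have h1 := sigmoid_lip w S hw hS (f x) (f y)
  have h2 := descent f hf L hsmooth x y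
  have h3 : |@inner ℝ _ _ (gradient f y) (x - y)| ≤ ‖gradient f y‖ * ‖x - y‖ :=
    abs_real_inner_le_norm _ _
  have h4 : |f x - f y| ≤ L / 2 * ‖x - y‖ ^ 2 + ‖gradient f y‖ * ‖x - y‖ := by
    have := abs_sub_abs_le_abs_sub (f x - f y) (@inner ℝ _ _ (gradient f y) (x - y))
    have h5 : |f x - f y| ≤ |f x - f y - @inner ℝ _ _ (gradient f y) (x - y)|
        + |@inner ℝ _ _ (gradient f y) (x - y)| := by
      calc |f x - f y| = |(f x - f y - @inner ℝ _ _ (gradient f y) (x - y))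
          + @inner ℝ _ _ (gradient f y) (x - y)| := by ring_nf
        _ ≤ _ := abs_add_le _ _
    linarith
  have h6 : (0:ℝ) ≤ ‖gradient f y‖ * ‖x - y‖ :=
    mul_nonneg (norm_nonneg _) (norm_nonneg _)
  calc |w * Real.exp (-(f x)) / (w * Real.exp (-(f x)) + S)
      - w * Real.exp (-(f y)) / (w * Real.exp (-(f y)) + S)| ≤ 1 / 4 * |f x - f y| := h1
    _ ≤ 1 / 4 * (L / 2 * ‖x - y‖ ^ 2 + ‖gradient f y‖ * ‖x - y‖) := by linarith
    _ ≤ (L / 8) * ‖x - y‖ ^ 2 + (3 / 8) * ‖gradient f y‖ * ‖x - y‖ := by linarith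
end

section
/- Let E be a complete real inner product space, N ≥ 1, and for j = 1,…,N let f_j : E → ℝ be differentiable and L-smooth, and let w_j > 0, S_j > 0 be real constants. Define g : E → ℝ by g(θ) = (1/N)·Σ_{j=1}^N ln(w_j·exp(−f_j(θ)) + S_j). Then for all θ_1, θ_2 ∈ E, g(θ_1) ≤ g(θ_2) + ⟨∇g(θ_2), θ_1 − θ_2⟩ + (L/2 + (3/(16N))·Σ_{j=1}^N ‖∇f_j(θ_2)‖²)·‖θ_1 − θ_2‖² + ((L/(16N))·Σ_{j=1}^N ‖∇f_j(θ_2)‖)·‖θ_1 − θ_2‖³. -/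
open Finset

private lemma mono_aux {u u' : ℝ → ℝ} (hu : ∀ t, HasDerivAt u (u' t) t)
    {a b c : ℝ} (h : ∀ t, 0 ≤ t → u' t ≤ a + b * t + c * t ^ 2) :
    ∀ t, 0 ≤ t → u t ≤ u 0 + (a * t + b * t ^ 2 / 2 + c * t ^ 3 / 3) := by
  intro t ht
  set v : ℝ → ℝ := fun s => (a * s ^ 1 + ((b / 2) * s ^ 2 + (c / 3) * s ^ 3)) - u s with hv
  have hv' : ∀ s, HasDerivAt v ((a + b * s + c * s ^ 2) - u' s) s := by
    intro s
    have H := (((hasDerivAt_pow 1 s).const_mul a).add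
      (((hasDerivAt_pow 2 s).const_mul (b / 2)).add
        ((hasDerivAt_pow 3 s).const_mul (c / 3)))).sub (hu s)
    refine H.congr_deriv ?_
    push_cast
    ring
  have hmono : MonotoneOn v (Set.Ici (0 : ℝ)) := by
    apply monotoneOn_of_deriv_nonneg (convex_Ici 0)
    · exact fun s _ => ((hv' s).continuousAt).continuousWithinAt
    · exact fun s _ => ((hv' s).differentiableAt).differentiableWithinAt
    · intro s hs
      rw [interior_Ici] at hs
      rw [(hv' s).deriv]
      have := h s (le_of_lt hs)
      linarith
  have h0 : v 0 ≤ v t := hmono (Set.self_mem_Ici) ht ht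
  have hv0 : v 0 = -u 0 := by simp [hv]
  rw [hv0] at h0
  have h0' : -u 0 ≤ (a * t ^ 1 + ((b / 2) * t ^ 2 + (c / 3) * t ^ 3)) - u t := h0
  ring_nf at h0' ⊢
  linarith

private lemma mono_aux_abs {u u' : ℝ → ℝ} (hu : ∀ t, HasDerivAt u (u' t) t)
    {a b c : ℝ} (h : ∀ t, 0 ≤ t → |u' t| ≤ a + b * t + c * t ^ 2) :
    ∀ t, 0 ≤ t → |u t - u 0| ≤ a * t + b * t ^ 2 / 2 + c * t ^ 3 / 3 := by
  intro t ht
  have h1 := mono_aux hu (fun s hs => (abs_le.1 (h s hs)).2) t ht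
  have h2 := mono_aux (u := fun s => -u s) (u' := fun s => -u' s)
      (fun s => (hu s).neg) (a := a) (b := b) (c := c)
      (fun s hs => by
        show -u' s ≤ a + b * s + c * s ^ 2
        have := (abs_le.1 (h s hs)).1; linarith) t ht
  have h2' : -u t ≤ -u 0 + (a * t + b * t ^ 2 / 2 + c * t ^ 3 / 3) := h2
  rw [abs_le]
  constructor <;> linarith

/-- derivative of `x ↦ log (w * exp (-x) + S)` -/
noncomputable def phid (w S x : ℝ) : ℝ :=
  -(w * Real.exp (-x)) / (w * Real.exp (-x) + S)

private lemma phi_hasDeriv {w S : ℝ} (hw : 0 < w) (hS : 0 < S) (x : ℝ) :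
    HasDerivAt (fun x => Real.log (w * Real.exp (-x) + S)) (phid w S x) x := by
  have hpos : 0 < w * Real.exp (-x) + S := by positivity
  have h1 : HasDerivAt (fun x : ℝ => w * Real.exp (-x) + S) (-(w * Real.exp (-x))) x := by
    have hneg : HasDerivAt (fun x : ℝ => -x) (-1 : ℝ) x := (hasDerivAt_id x).neg
    have := ((Real.hasDerivAt_exp (-x)).comp x hneg).const_mul w
    have h2 := this.add_const S
    refine h2.congr_deriv ?_
    ring
  have := h1.log (ne_of_gt hpos)
  exact this

private lemma phid_abs_le_one {w S : ℝ} (hw : 0 < w) (hS : 0 < S) (x : ℝ) :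
    |phid w S x| ≤ 1 := by
  have hu : 0 < w * Real.exp (-x) := by positivity
  rw [phid, abs_div, abs_neg, abs_of_pos hu, abs_of_pos (by linarith : (0:ℝ) < w * Real.exp (-x) + S),
    div_le_one (by linarith)]
  linarith

private lemma phid_hasDeriv {w S : ℝ} (hw : 0 < w) (hS : 0 < S) (x : ℝ) :
    HasDerivAt (phid w S)
      (w * Real.exp (-x) * S / (w * Real.exp (-x) + S) ^ 2) x := by
  have hpos : 0 < w * Real.exp (-x) + S := by positivity
  have hneg : HasDerivAt (fun x : ℝ => -x) (-1 : ℝ) x := (hasDerivAt_id x).neg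
  have hu : HasDerivAt (fun x : ℝ => w * Real.exp (-x)) (w * (Real.exp (-x) * -1)) x :=
    ((Real.hasDerivAt_exp (-x)).comp x hneg).const_mul w
  have htop : HasDerivAt (fun x : ℝ => -(w * Real.exp (-x))) (-(w * (Real.exp (-x) * -1))) x :=
    hu.neg
  have hbot : HasDerivAt (fun x : ℝ => w * Real.exp (-x) + S) (w * (Real.exp (-x) * -1)) x :=
    hu.add_const S
  have := htop.div hbot (ne_of_gt hpos)
  refine this.congr_deriv ?_
  field_simp
  ring

private lemma phid_lip {w S : ℝ} (hw : 0 < w) (hS : 0 < S) (x y : ℝ) :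
    |phid w S x - phid w S y| ≤ (1 / 4) * |x - y| := by
  have hlip := Convex.norm_image_sub_le_of_norm_hasDerivWithin_le
    (f := phid w S)
    (f' := fun x => w * Real.exp (-x) * S / (w * Real.exp (-x) + S) ^ 2)
    (s := Set.univ) (C := 1 / 4)
    (fun z _ => (phid_hasDeriv hw hS z).hasDerivWithinAt)
    (fun z _ => by
      have hu : 0 < w * Real.exp (-z) := by positivity
      have hpos : 0 < w * Real.exp (-z) + S := by positivity
      rw [Real.norm_eq_abs, abs_of_nonneg (by positivity)]
      rw [div_le_iff₀ (by positivity)]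
      nlinarith [sq_nonneg (w * Real.exp (-z) - S)])
    convex_univ (Set.mem_univ y) (Set.mem_univ x)
  simpa [Real.norm_eq_abs] using hlip

set_option maxHeartbeats 2000000 in
theorem stmt_7 {E : Type*} [NormedAddCommGroup E] [InnerProductSpace ℝ E] [CompleteSpace E]
    (N : ℕ) (hN : 1 ≤ N)
    (f : Fin N → E → ℝ) (hf : ∀ j, Differentiable ℝ (f j)) (L : ℝ)
    (hsmooth : ∀ (j : Fin N) (a b : E),
      ‖gradient (f j) a - gradient (f j) b‖ ≤ L * ‖a - b‖)
    (w S : Fin N → ℝ) (hw : ∀ j, 0 < w j) (hS : ∀ j, 0 < S j)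
    (g : E → ℝ)
    (hg : ∀ θ, g θ = (1 / (N : ℝ)) * ∑ j, Real.log (w j * Real.exp (-(f j θ)) + S j)) :
    ∀ θ1 θ2 : E,
      g θ1 ≤ g θ2 + (inner ℝ (gradient g θ2) (θ1 - θ2) : ℝ) +
        (L / 2 + (3 / (16 * (N : ℝ))) * ∑ j, ‖gradient (f j) θ2‖ ^ 2) * ‖θ1 - θ2‖ ^ 2 +
        ((L / (16 * (N : ℝ))) * ∑ j, ‖gradient (f j) θ2‖) * ‖θ1 - θ2‖ ^ 3 := by
  have hgfun : g = fun θ => (1 / (N : ℝ)) * ∑ j, Real.log (w j * Real.exp (-(f j θ)) + S j) :=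
    funext hg
  subst hgfun
  intro θ1 θ2
  by_cases hθ : θ1 = θ2
  · subst hθ
    simp
  -- from here on, θ1 ≠ θ2, hence L ≥ 0
  have hδne : θ1 - θ2 ≠ 0 := sub_ne_zero.mpr hθ
  have hnδpos : (0:ℝ) < ‖θ1 - θ2‖ := norm_pos_iff.mpr hδne
  have hL : 0 ≤ L := by
    have h0 := hsmooth ⟨0, hN⟩ θ1 θ2
    nlinarith [norm_nonneg (gradient (f ⟨0, hN⟩) θ1 - gradient (f ⟨0, hN⟩) θ2)]
  have hN0 : (0:ℝ) < (N:ℝ) := by exact_mod_cast Nat.lt_of_lt_of_le Nat.zero_lt_one hN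
  set δ : E := θ1 - θ2 with hδdef
  set nδ : ℝ := ‖δ‖ with hnδdef
  set γ : ℝ → E := fun t => θ2 + t • δ with hγdef
  have hγd : ∀ t : ℝ, HasDerivAt γ δ t := by
    intro t
    exact (((hasDerivAt_id t).smul_const δ).const_add θ2).congr_deriv (one_smul ℝ δ)
  have hγ0 : γ 0 = θ2 := by simp [hγdef]
  have hγ1 : γ 1 = θ1 := by simp [hγdef, hδdef]
  have hγdist : ∀ t : ℝ, 0 ≤ t → ‖γ t - θ2‖ = t * nδ := by
    intro t ht
    simp [hγdef, norm_smul, abs_of_nonneg ht, hnδdef]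
  -- fderiv of f j
  have hfd : ∀ (j : Fin N) (x : E),
      HasFDerivAt (f j) (InnerProductSpace.toDual ℝ E (gradient (f j) x)) x :=
    fun j x => ((hf j).differentiableAt.hasGradientAt)
  -- derivative of f j along γ
  have hF : ∀ (j : Fin N) (t : ℝ),
      HasDerivAt (fun t => f j (γ t)) (inner ℝ (gradient (f j) (γ t)) δ : ℝ) t := by
    intro j t
    have := (hfd j (γ t)).comp_hasDerivAt t (hγd t)
    rw [InnerProductSpace.toDual_apply_apply] at this
    exact this
  -- derivative of q j along γ
  have hq : ∀ (j : Fin N) (t : ℝ),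
      HasDerivAt (fun t => Real.log (w j * Real.exp (-(f j (γ t))) + S j))
        (phid (w j) (S j) (f j (γ t)) * (inner ℝ (gradient (f j) (γ t)) δ : ℝ)) t :=
    fun j t => by
      have := (phi_hasDeriv (hw j) (hS j) (f j (γ t))).comp t (hF j t)
      exact this
  -- abbreviations
  set G : Fin N → ℝ := fun j => ‖gradient (f j) θ2‖ with hGdef
  set K : Fin N → ℝ := fun j => phid (w j) (S j) (f j θ2) * (inner ℝ (gradient (f j) θ2) δ : ℝ)
    with hKdef
  -- bound on |f j (γ t) - f j θ2|
  have hFbound : ∀ (j : Fin N) (t : ℝ), 0 ≤ t →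
      |f j (γ t) - f j θ2| ≤ (G j * nδ) * t + (L * nδ ^ 2) * t ^ 2 / 2 := by
    intro j t ht
    have habs := mono_aux_abs (u := fun t => f j (γ t))
      (u' := fun t => (inner ℝ (gradient (f j) (γ t)) δ : ℝ)) (hF j)
      (a := G j * nδ) (b := L * nδ ^ 2) (c := 0)
      (fun s hs => by
        show |(inner ℝ (gradient (f j) (γ s)) δ : ℝ)| ≤ G j * nδ + L * nδ ^ 2 * s + 0 * s ^ 2
        have h1 : |(inner ℝ (gradient (f j) (γ s)) δ : ℝ)| ≤ ‖gradient (f j) (γ s)‖ * nδ :=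
          abs_real_inner_le_norm _ _
        have h2 : ‖gradient (f j) (γ s)‖ ≤ G j + L * (s * nδ) := by
          have h3 := hsmooth j (γ s) θ2
          rw [hγdist s hs] at h3
          have h4 := norm_sub_norm_le (gradient (f j) (γ s)) (gradient (f j) θ2)
          simp only [hGdef]
          linarith
        have hnδ0 : 0 ≤ nδ := norm_nonneg δ
        calc |(inner ℝ (gradient (f j) (γ s)) δ : ℝ)| ≤ ‖gradient (f j) (γ s)‖ * nδ := h1
          _ ≤ (G j + L * (s * nδ)) * nδ := by
              apply mul_le_mul_of_nonneg_right h2 hnδ0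
          _ ≤ G j * nδ + L * nδ ^ 2 * s + 0 * s ^ 2 := by ring_nf; nlinarith []
        ) t ht
    simp only [hγ0] at habs
    calc |f j (γ t) - f j θ2| ≤ G j * nδ * t + L * nδ ^ 2 * t ^ 2 / 2 + 0 * t ^ 3 / 3 := habs
      _ = (G j * nδ) * t + (L * nδ ^ 2) * t ^ 2 / 2 := by ring
  -- per-j bound on q
  have hqbound : ∀ j : Fin N,
      Real.log (w j * Real.exp (-(f j θ1)) + S j) ≤
        Real.log (w j * Real.exp (-(f j θ2)) + S j) + K j
        + (L / 2) * nδ ^ 2 + (3 / 16) * G j ^ 2 * nδ ^ 2 + (L / 16) * G j * nδ ^ 3 := by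
    intro j
    have hnδ0 : 0 ≤ nδ := norm_nonneg δ
    have hG0 : 0 ≤ G j := norm_nonneg _
    have key := mono_aux (u := fun t => Real.log (w j * Real.exp (-(f j (γ t))) + S j))
      (u' := fun t => phid (w j) (S j) (f j (γ t)) * (inner ℝ (gradient (f j) (γ t)) δ : ℝ))
      (hq j)
      (a := K j) (b := L * nδ ^ 2 + (1/4) * G j ^ 2 * nδ ^ 2) (c := (L/8) * G j * nδ ^ 3)
      (fun s hs => by
        show phid (w j) (S j) (f j (γ s)) * (inner ℝ (gradient (f j) (γ s)) δ : ℝ)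
          ≤ K j + (L * nδ ^ 2 + (1/4) * G j ^ 2 * nδ ^ 2) * s + ((L/8) * G j * nδ ^ 3) * s ^ 2
        -- decompose the derivative difference
        have hsplit : phid (w j) (S j) (f j (γ s)) * (inner ℝ (gradient (f j) (γ s)) δ : ℝ)
            = K j
            + phid (w j) (S j) (f j (γ s)) *
                ((inner ℝ (gradient (f j) (γ s)) δ : ℝ) - (inner ℝ (gradient (f j) θ2) δ : ℝ))
            + (phid (w j) (S j) (f j (γ s)) - phid (w j) (S j) (f j θ2)) *
                (inner ℝ (gradient (f j) θ2) δ : ℝ) := by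
          simp only [hKdef]; ring
        have hA : |phid (w j) (S j) (f j (γ s)) *
            ((inner ℝ (gradient (f j) (γ s)) δ : ℝ) - (inner ℝ (gradient (f j) θ2) δ : ℝ))|
            ≤ L * nδ ^ 2 * s := by
          rw [abs_mul]
          have h1 : |(inner ℝ (gradient (f j) (γ s)) δ : ℝ) - (inner ℝ (gradient (f j) θ2) δ : ℝ)|
              ≤ L * (s * nδ) * nδ := by
            rw [← inner_sub_left]
            calc |(inner ℝ (gradient (f j) (γ s) - gradient (f j) θ2) δ : ℝ)|
                ≤ ‖gradient (f j) (γ s) - gradient (f j) θ2‖ * nδ := abs_real_inner_le_norm _ _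
              _ ≤ (L * (s * nδ)) * nδ := by
                  apply mul_le_mul_of_nonneg_right _ (norm_nonneg δ)
                  have := hsmooth j (γ s) θ2
                  rwa [hγdist s hs] at this
          calc |phid (w j) (S j) (f j (γ s))| *
              |(inner ℝ (gradient (f j) (γ s)) δ : ℝ) - (inner ℝ (gradient (f j) θ2) δ : ℝ)|
              ≤ 1 * (L * (s * nδ) * nδ) := by
                apply mul_le_mul (phid_abs_le_one (hw j) (hS j) _) h1 (abs_nonneg _) zero_le_one
            _ = L * nδ ^ 2 * s := by ring
        have hB : |(phid (w j) (S j) (f j (γ s)) - phid (w j) (S j) (f j θ2)) *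
            (inner ℝ (gradient (f j) θ2) δ : ℝ)|
            ≤ (1/4) * ((G j * nδ) * s + (L * nδ ^ 2) * s ^ 2 / 2) * (G j * nδ) := by
          rw [abs_mul]
          have h1 : |phid (w j) (S j) (f j (γ s)) - phid (w j) (S j) (f j θ2)|
              ≤ (1/4) * ((G j * nδ) * s + (L * nδ ^ 2) * s ^ 2 / 2) := by
            calc |phid (w j) (S j) (f j (γ s)) - phid (w j) (S j) (f j θ2)|
                ≤ (1/4) * |f j (γ s) - f j θ2| := phid_lip (hw j) (hS j) _ _
              _ ≤ (1/4) * ((G j * nδ) * s + (L * nδ ^ 2) * s ^ 2 / 2) := by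
                  have := hFbound j s hs
                  linarith
          have h2 : |(inner ℝ (gradient (f j) θ2) δ : ℝ)| ≤ G j * nδ := abs_real_inner_le_norm _ _
          apply mul_le_mul h1 h2 (abs_nonneg _)
          positivity
        rw [hsplit]
        have e1 := neg_abs_le (phid (w j) (S j) (f j (γ s)) *
            ((inner ℝ (gradient (f j) (γ s)) δ : ℝ) - (inner ℝ (gradient (f j) θ2) δ : ℝ)))
        have e2 := neg_abs_le ((phid (w j) (S j) (f j (γ s)) - phid (w j) (S j) (f j θ2)) *
            (inner ℝ (gradient (f j) θ2) δ : ℝ))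
        have l1 := le_abs_self (phid (w j) (S j) (f j (γ s)) *
            ((inner ℝ (gradient (f j) (γ s)) δ : ℝ) - (inner ℝ (gradient (f j) θ2) δ : ℝ)))
        have l2 := le_abs_self ((phid (w j) (S j) (f j (γ s)) - phid (w j) (S j) (f j θ2)) *
            (inner ℝ (gradient (f j) θ2) δ : ℝ))
        nlinarith [hA, hB])
      1 zero_le_one
    simp only [hγ0, hγ1] at key
    have hfinal : K j * 1 + (L * nδ ^ 2 + (1/4) * G j ^ 2 * nδ ^ 2) * 1 ^ 2 / 2
        + ((L/8) * G j * nδ ^ 3) * 1 ^ 3 / 3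
        ≤ K j + (L / 2) * nδ ^ 2 + (3 / 16) * G j ^ 2 * nδ ^ 2 + (L / 16) * G j * nδ ^ 3 := by
      nlinarith [mul_nonneg (mul_nonneg hL hG0) (pow_nonneg hnδ0 3),
        mul_nonneg (sq_nonneg (G j)) (sq_nonneg nδ)]
    linarith
  -- gradient of g
  have hgrad : gradient (fun θ => (1 / (N : ℝ)) *
      ∑ j, Real.log (w j * Real.exp (-(f j θ)) + S j)) θ2
      = (1/(N:ℝ)) • ∑ j, phid (w j) (S j) (f j θ2) • gradient (f j) θ2 := by
    apply HasGradientAt.gradient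
    rw [hasGradientAt_iff_hasFDerivAt]
    have hterm : ∀ j : Fin N, HasFDerivAt (fun θ => Real.log (w j * Real.exp (-(f j θ)) + S j))
        (phid (w j) (S j) (f j θ2) • (InnerProductSpace.toDual ℝ E (gradient (f j) θ2))) θ2 :=
      fun j => (phi_hasDeriv (hw j) (hS j) (f j θ2)).comp_hasFDerivAt θ2 (hfd j θ2)
    have hsum := HasFDerivAt.sum (u := Finset.univ) (fun j _ => hterm j)
    have hmul := hsum.const_mul ((1:ℝ)/(N:ℝ))
    refine (hmul.congr_fderiv ?_).congr_of_eventuallyEq (Filter.Eventually.of_forall fun y => ?_)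
    · simp only [map_smul, map_sum]
    · simp [Finset.sum_apply]
  have hinner : (inner ℝ (gradient (fun θ => (1 / (N : ℝ)) *
      ∑ j, Real.log (w j * Real.exp (-(f j θ)) + S j)) θ2) δ : ℝ)
      = (1/(N:ℝ)) * ∑ j, K j := by
    rw [hgrad, real_inner_smul_left, sum_inner]
    simp only [real_inner_smul_left, hKdef]
  -- put everything together
  have hsum1 : ∑ j, Real.log (w j * Real.exp (-(f j θ1)) + S j)
      ≤ ∑ j, (Real.log (w j * Real.exp (-(f j θ2)) + S j) + K j
        + (L / 2) * nδ ^ 2 + (3 / 16) * G j ^ 2 * nδ ^ 2 + (L / 16) * G j * nδ ^ 3) :=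
    Finset.sum_le_sum (fun j _ => hqbound j)
  have hexp : ∑ j, (Real.log (w j * Real.exp (-(f j θ2)) + S j) + K j
        + (L / 2) * nδ ^ 2 + (3 / 16) * G j ^ 2 * nδ ^ 2 + (L / 16) * G j * nδ ^ 3)
      = ∑ j, Real.log (w j * Real.exp (-(f j θ2)) + S j) + ∑ j, K j
        + (N:ℝ) * ((L / 2) * nδ ^ 2) + (3 / 16) * (∑ j, G j ^ 2) * nδ ^ 2
        + (L / 16) * (∑ j, G j) * nδ ^ 3 := by
    rw [Finset.sum_add_distrib, Finset.sum_add_distrib, Finset.sum_add_distrib,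
      Finset.sum_add_distrib, Finset.sum_const, Finset.card_univ, Fintype.card_fin,
      nsmul_eq_mul]
    have e1 : (3 / 16 : ℝ) * (∑ j, G j ^ 2) * nδ ^ 2 = ∑ j, (3 / 16) * G j ^ 2 * nδ ^ 2 := by
      rw [Finset.mul_sum, Finset.sum_mul]
    have e2 : (L / 16 : ℝ) * (∑ j, G j) * nδ ^ 3 = ∑ j, (L / 16) * G j * nδ ^ 3 := by
      rw [Finset.mul_sum, Finset.sum_mul]
    rw [e1, e2]
  have hmain : (1/(N:ℝ)) * ∑ j, Real.log (w j * Real.exp (-(f j θ1)) + S j)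
      ≤ (1/(N:ℝ)) * ∑ j, Real.log (w j * Real.exp (-(f j θ2)) + S j)
        + (1/(N:ℝ)) * ∑ j, K j
        + (L / 2) * nδ ^ 2 + (3 / (16 * (N:ℝ))) * (∑ j, G j ^ 2) * nδ ^ 2
        + (L / (16 * (N:ℝ))) * (∑ j, G j) * nδ ^ 3 := by
    have h2 := mul_le_mul_of_nonneg_left (hsum1.trans_eq hexp)
      (le_of_lt (one_div_pos.mpr hN0))
    have h3 : (1/(N:ℝ)) * (∑ j, Real.log (w j * Real.exp (-(f j θ2)) + S j) + ∑ j, K j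
        + (N:ℝ) * ((L / 2) * nδ ^ 2) + (3 / 16) * (∑ j, G j ^ 2) * nδ ^ 2
        + (L / 16) * (∑ j, G j) * nδ ^ 3)
        = (1/(N:ℝ)) * ∑ j, Real.log (w j * Real.exp (-(f j θ2)) + S j)
        + (1/(N:ℝ)) * ∑ j, K j
        + (L / 2) * nδ ^ 2 + (3 / (16 * (N:ℝ))) * (∑ j, G j ^ 2) * nδ ^ 2
        + (L / (16 * (N:ℝ))) * (∑ j, G j) * nδ ^ 3 := by
      field_simp
    rw [h3] at h2
    exact h2
  rw [hinner]
  refine hmain.trans (le_of_eq (by ring))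
end

section
/- Let E be a complete real inner product space, N ≥ 1, and for j = 1,…,N let f_j : E → ℝ be differentiable and L-smooth, and let w_j > 0, S_j > 0 be real constants. Define g : E → ℝ by g(θ) = (1/N)·Σ_{j=1}^N ln(w_j·exp(−f_j(θ)) + S_j). Then for all θ_1, θ_2 ∈ E, g(θ_1) ≥ g(θ_2) + ⟨∇g(θ_2), θ_1 − θ_2⟩ − (L/2 + (3/(16N))·Σ_{j=1}^N ‖∇f_j(θ_2)‖²)·‖θ_1 − θ_2‖² − ((L/(16N))·Σ_{j=1}^N ‖∇f_j(θ_2)‖)·‖θ_1 − θ_2‖³. -/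
open Finset

-- Descent lemma: L-Lipschitz gradient gives quadratic upper bound.
lemma my_descent {E : Type*} [NormedAddCommGroup E] [InnerProductSpace ℝ E] [CompleteSpace E]
    (f : E → ℝ) (hf : Differentiable ℝ f) (L : ℝ)
    (hs : ∀ a b : E, ‖gradient f a - gradient f b‖ ≤ L * ‖a - b‖) (x y : E) :
    f y ≤ f x + (inner ℝ (gradient f x) (y - x) : ℝ) + L / 2 * ‖y - x‖ ^ 2 := by
  set Δ := y - x with hΔ
  have key : ∀ t : ℝ, HasDerivAt (fun t : ℝ => f (x + t • Δ))
      (inner ℝ (gradient f (x + t • Δ)) Δ : ℝ) t := by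
    intro t
    have hline : HasDerivAt (fun t : ℝ => x + t • Δ) Δ t := by
      simpa using ((hasDerivAt_id t).smul_const Δ).const_add x
    have hgrad := (hf (x + t • Δ)).hasGradientAt.hasFDerivAt
    have := hgrad.comp_hasDerivAt t hline
    exact this.congr_deriv InnerProductSpace.toDual_apply_apply
  set c : ℝ := inner ℝ (gradient f x) Δ with hc
  set ψ : ℝ → ℝ := fun t => f (x + t • Δ) - t * c - L / 2 * ‖Δ‖ ^ 2 * t ^ 2 with hψdef
  have hψ : ∀ t : ℝ, HasDerivAt ψ
      ((inner ℝ (gradient f (x + t • Δ)) Δ : ℝ) - c - L / 2 * ‖Δ‖ ^ 2 * (2 * t)) t := by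
    intro t
    have h1 := (key t).sub (hasDerivAt_mul_const c)
    have h2 := (hasDerivAt_pow 2 t).const_mul (L / 2 * ‖Δ‖ ^ 2)
    have := h1.sub h2
    refine this.congr_deriv ?_
    ring
  have hmono : AntitoneOn ψ (Set.Icc (0:ℝ) 1) := by
    apply antitoneOn_of_deriv_nonpos (convex_Icc 0 1)
    · exact fun t _ => ((hψ t).continuousAt).continuousWithinAt
    · exact fun t _ => ((hψ t).differentiableAt).differentiableWithinAt
    · intro t ht
      rw [interior_Icc] at ht
      rw [(hψ t).deriv]
      have hb : (inner ℝ (gradient f (x + t • Δ) - gradient f x) Δ : ℝ)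
          ≤ L * t * ‖Δ‖ ^ 2 := by
        calc (inner ℝ (gradient f (x + t • Δ) - gradient f x) Δ : ℝ)
            ≤ ‖gradient f (x + t • Δ) - gradient f x‖ * ‖Δ‖ := real_inner_le_norm _ _
          _ ≤ (L * ‖(x + t • Δ) - x‖) * ‖Δ‖ :=
              mul_le_mul_of_nonneg_right (hs _ _) (norm_nonneg _)
          _ = L * t * ‖Δ‖ ^ 2 := by
              rw [add_sub_cancel_left, norm_smul, Real.norm_eq_abs,
                abs_of_nonneg ht.1.le]
              ring
      have hsplit : (inner ℝ (gradient f (x + t • Δ)) Δ : ℝ) - c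
          = (inner ℝ (gradient f (x + t • Δ) - gradient f x) Δ : ℝ) := by
        rw [inner_sub_left, hc]
      nlinarith [hb, hsplit]
  have h01 := hmono (Set.mem_Icc.mpr ⟨le_rfl, zero_le_one⟩)
    (Set.mem_Icc.mpr ⟨zero_le_one, le_rfl⟩) zero_le_one
  have hψ0 : ψ 0 = f x := by simp [hψdef]
  have hψ1 : ψ 1 = f y - c - L / 2 * ‖Δ‖ ^ 2 := by
    simp [hψdef, hΔ]
  rw [hψ0, hψ1] at h01
  linarith

theorem stmt_8 {E : Type*} [NormedAddCommGroup E] [InnerProductSpace ℝ E] [CompleteSpace E]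
    (N : ℕ) (hN : 1 ≤ N)
    (f : Fin N → E → ℝ) (hf : ∀ j, Differentiable ℝ (f j)) (L : ℝ)
    (hsmooth : ∀ (j : Fin N) (a b : E),
      ‖gradient (f j) a - gradient (f j) b‖ ≤ L * ‖a - b‖)
    (w S : Fin N → ℝ) (hw : ∀ j, 0 < w j) (hS : ∀ j, 0 < S j)
    (g : E → ℝ)
    (hg : ∀ θ, g θ = (1 / (N : ℝ)) * ∑ j, Real.log (w j * Real.exp (-(f j θ)) + S j)) :
    ∀ θ1 θ2 : E,
      g θ1 ≥ g θ2 + (inner ℝ (gradient g θ2) (θ1 - θ2) : ℝ) -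
        (L / 2 + (3 / (16 * (N : ℝ))) * ∑ j, ‖gradient (f j) θ2‖ ^ 2) * ‖θ1 - θ2‖ ^ 2 -
        ((L / (16 * (N : ℝ))) * ∑ j, ‖gradient (f j) θ2‖) * ‖θ1 - θ2‖ ^ 3 := by
  intro θ1 θ2
  by_cases hθ : θ1 = θ2
  · subst hθ
    simp
  have hNpos : (0:ℝ) < (N:ℝ) := by exact_mod_cast hN
  have hX : ∀ (j : Fin N) (θ : E), 0 < w j * Real.exp (-(f j θ)) + S j := fun j θ =>
    add_pos (mul_pos (hw j) (Real.exp_pos _)) (hS j)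
  set σ : Fin N → ℝ := fun j => w j * Real.exp (-(f j θ2)) / (w j * Real.exp (-(f j θ2)) + S j)
    with hσdef
  have hσ0 : ∀ j, 0 < σ j := fun j =>
    div_pos (mul_pos (hw j) (Real.exp_pos _)) (hX j θ2)
  have hσ1 : ∀ j, σ j ≤ 1 := fun j => by
    rw [hσdef]
    rw [div_le_one (hX j θ2)]
    linarith [(hS j).le]
  set G : Fin N → E := fun j => gradient (f j) θ2 with hG
  set Δ : E := θ1 - θ2 with hΔ
  -- gradient of g
  have hgradg : HasGradientAt g ((1 / (N:ℝ)) • ∑ j, (-σ j) • G j) θ2 := by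
    rw [hasGradientAt_iff_hasFDerivAt]
    have hterm : ∀ j : Fin N, HasFDerivAt (fun θ => Real.log (w j * Real.exp (-(f j θ)) + S j))
        ((-σ j) • (InnerProductSpace.toDual ℝ E (G j) : E →L[ℝ] ℝ)) θ2 := by
      intro j
      have hH : HasDerivAt (fun u : ℝ => Real.log (w j * Real.exp (-u) + S j))
          (-σ j) (f j θ2) := by
        have h1 : HasDerivAt (fun u : ℝ => w j * Real.exp (-u) + S j)
            (w j * (Real.exp (-(f j θ2)) * (-1))) (f j θ2) :=
          (((hasDerivAt_id (f j θ2)).neg.exp).const_mul (w j)).add_const (S j)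
        have h2 := (Real.hasDerivAt_log (hX j θ2).ne').comp (f j θ2) h1
        refine h2.congr_deriv ?_
        rw [hσdef]
        field_simp
      have hfd := (hf j θ2).hasGradientAt.hasFDerivAt
      exact hH.comp_hasFDerivAt θ2 hfd
    have hsum := HasFDerivAt.sum (fun j (_ : j ∈ Finset.univ) => hterm j)
    have hmul := hsum.const_mul (1 / (N:ℝ))
    have hgfd : HasFDerivAt g
        ((1 / (N:ℝ)) • ∑ j, ((-σ j) • (InnerProductSpace.toDual ℝ E (G j) : E →L[ℝ] ℝ))) θ2 := by
      refine HasFDerivAt.congr_of_eventuallyEq hmul ?_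
      filter_upwards with θ
      rw [hg θ]
      rw [Finset.sum_apply]
    refine hgfd.congr_fderiv ?_
    rw [map_smul, map_sum]
    congr 1
    refine Finset.sum_congr rfl fun j _ => ?_
    rw [map_smul]
  have hgradg_eq : gradient g θ2 = (1 / (N:ℝ)) • ∑ j, (-σ j) • G j := hgradg.gradient
  -- inner product formula
  have hinner : (inner ℝ (gradient g θ2) Δ : ℝ)
      = (1 / (N:ℝ)) * ∑ j, (-σ j) * (inner ℝ (G j) Δ : ℝ) := by
    rw [hgradg_eq, real_inner_smul_left, sum_inner]
    congr 1
    exact Finset.sum_congr rfl fun j _ => real_inner_smul_left _ _ _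
  -- L ≥ 0
  have hL : 0 ≤ L := by
    have h := hsmooth ⟨0, hN⟩ θ1 θ2
    have hpos : 0 < ‖θ1 - θ2‖ := by
      rw [norm_pos_iff, sub_ne_zero]; exact hθ
    nlinarith [norm_nonneg (gradient (f ⟨0, hN⟩) θ1 - gradient (f ⟨0, hN⟩) θ2)]
  -- per-term inequality
  have hterm : ∀ j : Fin N,
      Real.log (w j * Real.exp (-(f j θ1)) + S j)
      ≥ Real.log (w j * Real.exp (-(f j θ2)) + S j)
        + (-σ j) * (inner ℝ (G j) Δ : ℝ) - L / 2 * ‖Δ‖ ^ 2 := by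
    intro j
    set d : ℝ := f j θ1 - f j θ2 with hd
    have hjensen : Real.exp (-(σ j) * d) ≤ σ j * Real.exp (-d) + (1 - σ j) := by
      have := convexOn_exp.2 (Set.mem_univ (-d)) (Set.mem_univ (0:ℝ))
        (hσ0 j).le (show (0:ℝ) ≤ 1 - σ j by linarith [hσ1 j])
        (show σ j + (1 - σ j) = 1 by ring)
      simpa [mul_comm] using this
    have hσX : σ j * (w j * Real.exp (-(f j θ2)) + S j) = w j * Real.exp (-(f j θ2)) := by
      rw [hσdef]
      exact div_mul_cancel₀ _ (hX j θ2).ne'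
    have hkey : Real.exp (-(f j θ1)) = Real.exp (-(f j θ2)) * Real.exp (-d) := by
      rw [← Real.exp_add]
      congr 1
      rw [hd]; ring
    have hfact : w j * Real.exp (-(f j θ1)) + S j
        = (w j * Real.exp (-(f j θ2)) + S j) * (σ j * Real.exp (-d) + (1 - σ j)) := by
      calc w j * Real.exp (-(f j θ1)) + S j
          = σ j * (w j * Real.exp (-(f j θ2)) + S j) * Real.exp (-d) + S j := by
            rw [hσX, hkey]; ring
        _ = (w j * Real.exp (-(f j θ2)) + S j) * (σ j * Real.exp (-d) + (1 - σ j)) := by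
            linear_combination hσX
    have hlog : Real.log (w j * Real.exp (-(f j θ1)) + S j)
        ≥ Real.log (w j * Real.exp (-(f j θ2)) + S j) + (-(σ j)) * d := by
      rw [hfact, Real.log_mul (hX j θ2).ne'
        (by nlinarith [Real.exp_pos (-d), hσ0 j, hσ1 j] :
          (0:ℝ) < σ j * Real.exp (-d) + (1 - σ j)).ne']
      have h2 : -(σ j) * d ≤ Real.log (σ j * Real.exp (-d) + (1 - σ j)) := by
        calc -(σ j) * d = Real.log (Real.exp (-(σ j) * d)) := (Real.log_exp _).symm
          _ ≤ _ := Real.log_le_log (Real.exp_pos _) hjensen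
      linarith
    have hdesc := my_descent (f j) (hf j) L (hsmooth j) θ2 θ1
    have h1 : d ≤ (inner ℝ (G j) Δ : ℝ) + L / 2 * ‖Δ‖ ^ 2 := by
      rw [hd, hΔ, hG]; linarith [hdesc]
    have hσd : (-(σ j)) * d ≥ (-σ j) * (inner ℝ (G j) Δ : ℝ) - L / 2 * ‖Δ‖ ^ 2 := by
      nlinarith [mul_nonneg (hσ0 j).le (sub_nonneg.mpr h1),
        mul_nonneg (sub_nonneg.mpr (hσ1 j))
          (mul_nonneg (div_nonneg hL two_pos.le) (sq_nonneg ‖Δ‖))]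
    clear_value d σ G Δ
    linarith
  -- sum up
  have hsumineq : g θ1 ≥ g θ2 + (inner ℝ (gradient g θ2) Δ : ℝ) - L / 2 * ‖Δ‖ ^ 2 := by
    rw [hg θ1, hg θ2, hinner]
    have hsum : ∑ j, (Real.log (w j * Real.exp (-(f j θ2)) + S j)
          + (-σ j) * (inner ℝ (G j) Δ : ℝ) - L / 2 * ‖Δ‖ ^ 2)
        ≤ ∑ j, Real.log (w j * Real.exp (-(f j θ1)) + S j) :=
      Finset.sum_le_sum fun j _ => hterm j
    rw [Finset.sum_sub_distrib, Finset.sum_add_distrib, Finset.sum_const,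
      Finset.card_univ, Fintype.card_fin, nsmul_eq_mul] at hsum
    have hmul := mul_le_mul_of_nonneg_left hsum (le_of_lt (by positivity :
      (0:ℝ) < 1 / (N:ℝ)))
    have hNne : (N:ℝ) ≠ 0 := hNpos.ne'
    have hexpand : (1 / (N:ℝ)) * (∑ j, Real.log (w j * Real.exp (-(f j θ2)) + S j)
          + ∑ j, (-σ j) * (inner ℝ (G j) Δ : ℝ) - (N:ℝ) * (L / 2 * ‖Δ‖ ^ 2))
        = (1 / (N:ℝ)) * ∑ j, Real.log (w j * Real.exp (-(f j θ2)) + S j)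
          + (1 / (N:ℝ)) * ∑ j, (-σ j) * (inner ℝ (G j) Δ : ℝ) - L / 2 * ‖Δ‖ ^ 2 := by
      field_simp
      try ring
    rw [hexpand] at hmul
    linarith
  -- final: extra terms nonnegative
  have h1 : 0 ≤ ((3 / (16 * (N : ℝ))) * ∑ j, ‖gradient (f j) θ2‖ ^ 2) * ‖θ1 - θ2‖ ^ 2 := by
    positivity
  have h2 : 0 ≤ ((L / (16 * (N : ℝ))) * ∑ j, ‖gradient (f j) θ2‖) * ‖θ1 - θ2‖ ^ 3 := by
    positivity
  have hexp : (L / 2 + (3 / (16 * (N : ℝ))) * ∑ j, ‖gradient (f j) θ2‖ ^ 2) * ‖θ1 - θ2‖ ^ 2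
      = L / 2 * ‖θ1 - θ2‖ ^ 2
        + ((3 / (16 * (N : ℝ))) * ∑ j, ‖gradient (f j) θ2‖ ^ 2) * ‖θ1 - θ2‖ ^ 2 := by
    ring
  rw [hexp]
  rw [hΔ] at hsumineq
  linarith
end

section
/- Let E be a complete real inner product space, N, K ≥ 1, and for j = 1,…,N let f_j : E → ℝ be differentiable and L-smooth, with the uniform gradient bound (1/N)·Σ_{j=1}^N ‖∇f_j(θ)‖² ≤ σ² for all θ ∈ E. Let w_{j,k} > 0 be positive constants and define L(θ_1,…,θ_K) = (1/N)·Σ_{j=1}^N ln(Σ_{k=1}^K w_{j,k}·exp(−f_j(θ_k))), with ∇_k L(Θ) the gradient at θ_k of the map θ ↦ L(θ_1,…,θ_{k−1}, θ, θ_{k+1},…,θ_K). Let η > 0, let Θ = (θ_1,…,θ_K), and define Θ' by θ'_k = θ_k + η·∇_k L(Θ) for each k. Then L(Θ') − L(Θ) ≥ Σ_{k=1}^K ( η − (5L/2)·η² − (9σ²/16)·η² − (3Lσ²/16)·η³ )·‖∇_k L(Θ)‖². -/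
open Finset

private lemma aux_descent (u u' : ℝ → ℝ) (hu : ∀ t, HasDerivAt u (u' t) t)
    (T c a b : ℝ) (hT : 0 ≤ T)
    (hbd : ∀ t ∈ Set.Icc (0:ℝ) T, c - a*t - b*t^2 ≤ u' t) :
    c*T - a*T^2/2 - b*T^3/3 ≤ u T - u 0 := by
  set φ : ℝ → ℝ := fun t => u t - (c*t - a*t^2/2 - b*t^3/3) with hφdef
  have hφ : ∀ t, HasDerivAt φ (u' t - (c - a*t - b*t^2)) t := by
    intro t
    have hp : HasDerivAt (fun t:ℝ => c*t - a*t^2/2 - b*t^3/3) (c - a*t - b*t^2) t := by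
      have h1 : HasDerivAt (fun t:ℝ => c*t) (c*1) t := (hasDerivAt_id t).const_mul c
      have h2 : HasDerivAt (fun t:ℝ => a*t^2/2) (a*(2*t^1)/2) t :=
        ((hasDerivAt_pow 2 t).const_mul a).div_const 2
      have h3 : HasDerivAt (fun t:ℝ => b*t^3/3) (b*(3*t^2)/3) t :=
        ((hasDerivAt_pow 3 t).const_mul b).div_const 3
      have := (h1.fun_sub h2).fun_sub h3
      exact this.congr_deriv (by ring)
    exact (hu t).sub hp
  have hmono : MonotoneOn φ (Set.Icc 0 T) := by
    apply monotoneOn_of_deriv_nonneg (convex_Icc 0 T)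
    · exact fun t _ => (hφ t).continuousAt.continuousWithinAt
    · exact fun t _ => (hφ t).differentiableAt.differentiableWithinAt
    · intro t ht
      rw [(hφ t).deriv]
      have := hbd t (interior_subset ht)
      linarith
  have h0T : φ 0 ≤ φ T :=
    hmono (Set.left_mem_Icc.2 hT) (Set.right_mem_Icc.2 hT) hT
  simp only [hφdef] at h0T
  nlinarith [h0T]

private lemma aux_cov {K : ℕ} (p q v : Fin K → ℝ) (hp0 : ∀ k, 0 ≤ p k) (hp1 : ∀ k, p k ≤ 1)
    (hps : ∑ k, p k = 1) :
    |∑ k, p k * q k * v k - (∑ k, p k * q k) * (∑ k, p k * v k)| ≤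
      Real.sqrt (∑ k, (q k)^2) * Real.sqrt (∑ k, (v k)^2) := by
  set Q : ℝ := ∑ k, p k * q k with hQ
  have hrw : ∑ k, p k * q k * v k - (∑ k, p k * q k) * (∑ k, p k * v k)
      = ∑ k, (p k * (q k - Q)) * v k := by
    have : ∀ k ∈ univ, (p k * (q k - Q)) * v k = p k * q k * v k - Q * (p k * v k) :=
      fun k _ => by ring
    rw [Finset.sum_congr rfl this, Finset.sum_sub_distrib, ← Finset.mul_sum]
  rw [hrw]
  have hcs : (∑ k, (p k * (q k - Q)) * v k)^2 ≤
      (∑ k, p k * (q k - Q)^2) * (∑ k, p k * (v k)^2) := by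
    have h := Finset.sum_mul_sq_le_sq_mul_sq univ
      (fun k => Real.sqrt (p k) * (q k - Q)) (fun k => Real.sqrt (p k) * v k)
    have e1 : ∀ k ∈ univ, (Real.sqrt (p k) * (q k - Q)) * (Real.sqrt (p k) * v k)
        = (p k * (q k - Q)) * v k := fun k _ => by
      have h := Real.mul_self_sqrt (hp0 k)
      linear_combination (q k - Q) * v k * h
    have e2 : ∀ k ∈ univ, (Real.sqrt (p k) * (q k - Q))^2 = p k * (q k - Q)^2 := fun k _ => by
      rw [mul_pow, Real.sq_sqrt (hp0 k)]
    have e3 : ∀ k ∈ univ, (Real.sqrt (p k) * v k)^2 = p k * (v k)^2 := fun k _ => by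
      rw [mul_pow, Real.sq_sqrt (hp0 k)]
    rw [Finset.sum_congr rfl e1, Finset.sum_congr rfl e2, Finset.sum_congr rfl e3] at h
    exact h
  have hA : (∑ k, p k * (q k - Q)^2) ≤ ∑ k, (q k)^2 := by
    have hexp : ∀ k ∈ univ, p k * (q k - Q)^2
        = p k * (q k)^2 - 2*Q*(p k * q k) + Q^2 * p k := fun k _ => by ring
    rw [Finset.sum_congr rfl hexp, Finset.sum_add_distrib, Finset.sum_sub_distrib,
      ← Finset.mul_sum, ← Finset.mul_sum, ← hQ, hps]
    have : ∑ k, p k * (q k)^2 ≤ ∑ k, (q k)^2 :=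
      Finset.sum_le_sum fun k _ => by nlinarith [hp0 k, hp1 k, sq_nonneg (q k)]
    nlinarith [this, sq_nonneg Q]
  have hB : (∑ k, p k * (v k)^2) ≤ ∑ k, (v k)^2 :=
    Finset.sum_le_sum fun k _ => by nlinarith [hp0 k, hp1 k, sq_nonneg (v k)]
  have hq2 : (0:ℝ) ≤ ∑ k, (q k)^2 := Finset.sum_nonneg fun k _ => sq_nonneg _
  have hv2 : (0:ℝ) ≤ ∑ k, (v k)^2 := Finset.sum_nonneg fun k _ => sq_nonneg _
  have hAB0 : (0:ℝ) ≤ (∑ k, p k * (v k)^2) :=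
    Finset.sum_nonneg fun k _ => mul_nonneg (hp0 k) (sq_nonneg _)
  have hA0 : (0:ℝ) ≤ (∑ k, p k * (q k - Q)^2) :=
    Finset.sum_nonneg fun k _ => mul_nonneg (hp0 k) (sq_nonneg _)
  have hsq : (∑ k, (p k * (q k - Q)) * v k)^2 ≤ (∑ k, (q k)^2) * (∑ k, (v k)^2) := by
    calc (∑ k, (p k * (q k - Q)) * v k)^2 ≤ (∑ k, p k * (q k - Q)^2) * (∑ k, p k * (v k)^2) := hcs
    _ ≤ (∑ k, (q k)^2) * (∑ k, (v k)^2) := by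
        apply mul_le_mul hA hB hAB0 hq2
  calc |∑ k, (p k * (q k - Q)) * v k| = Real.sqrt ((∑ k, (p k * (q k - Q)) * v k)^2) :=
        (Real.sqrt_sq_eq_abs _).symm
  _ ≤ Real.sqrt ((∑ k, (q k)^2) * (∑ k, (v k)^2)) := Real.sqrt_le_sqrt hsq
  _ = Real.sqrt (∑ k, (q k)^2) * Real.sqrt (∑ k, (v k)^2) := Real.sqrt_mul hq2 _

private lemma aux_mink {K : ℕ} (a b : Fin K → ℝ) (ha : ∀ k, 0 ≤ a k) (hb : ∀ k, 0 ≤ b k) :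
    Real.sqrt (∑ k, (a k + b k)^2) ≤
      Real.sqrt (∑ k, (a k)^2) + Real.sqrt (∑ k, (b k)^2) := by
  have hA : (0:ℝ) ≤ ∑ k, (a k)^2 := Finset.sum_nonneg fun k _ => sq_nonneg _
  have hB : (0:ℝ) ≤ ∑ k, (b k)^2 := Finset.sum_nonneg fun k _ => sq_nonneg _
  have hcs : (∑ k, a k * b k) ≤ Real.sqrt (∑ k, (a k)^2) * Real.sqrt (∑ k, (b k)^2) := by
    have h := Finset.sum_mul_sq_le_sq_mul_sq univ a b
    have h0 : (0:ℝ) ≤ ∑ k, a k * b k :=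
      Finset.sum_nonneg fun k _ => mul_nonneg (ha k) (hb k)
    calc (∑ k, a k * b k) = Real.sqrt ((∑ k, a k * b k)^2) := (Real.sqrt_sq h0).symm
    _ ≤ Real.sqrt ((∑ k, (a k)^2) * (∑ k, (b k)^2)) := Real.sqrt_le_sqrt h
    _ = _ := Real.sqrt_mul hA _
  have hexp : (∑ k, (a k + b k)^2)
      ≤ (Real.sqrt (∑ k, (a k)^2) + Real.sqrt (∑ k, (b k)^2))^2 := by
    have : ∀ k ∈ univ, (a k + b k)^2 = (a k)^2 + 2*(a k * b k) + (b k)^2 := fun k _ => by ring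
    rw [Finset.sum_congr rfl this, Finset.sum_add_distrib, Finset.sum_add_distrib,
      ← Finset.mul_sum]
    nlinarith [Real.sq_sqrt hA, Real.sq_sqrt hB, hcs]
  calc Real.sqrt (∑ k, (a k + b k)^2)
      ≤ Real.sqrt ((Real.sqrt (∑ k, (a k)^2) + Real.sqrt (∑ k, (b k)^2))^2) :=
        Real.sqrt_le_sqrt hexp
  _ = _ := Real.sqrt_sq (by positivity)

private lemma aux_avg_sqrt {N : ℕ} (x : Fin N → ℝ) (hx : ∀ j, 0 ≤ x j) (hN : (0:ℝ) < N) :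
    (1/(N:ℝ)) * ∑ j, Real.sqrt (x j) ≤ Real.sqrt ((1/(N:ℝ)) * ∑ j, x j) := by
  have h0 : (0:ℝ) ≤ (1/(N:ℝ)) * ∑ j, Real.sqrt (x j) := by positivity
  rw [show ((1/(N:ℝ)) * ∑ j, Real.sqrt (x j)) = Real.sqrt (((1/(N:ℝ)) * ∑ j, Real.sqrt (x j))^2) from (Real.sqrt_sq h0).symm]
  apply Real.sqrt_le_sqrt
  have h := Finset.sum_mul_sq_le_sq_mul_sq univ (fun _ : Fin N => (1:ℝ)) (fun j => Real.sqrt (x j))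
  simp only [one_pow, one_mul, Finset.sum_const, card_univ, Fintype.card_fin, nsmul_eq_mul, mul_one] at h
  have h2 : ∀ j ∈ univ, (Real.sqrt (x j))^2 = x j := fun j _ => Real.sq_sqrt (hx j)
  rw [Finset.sum_congr rfl h2] at h
  have hN2 : (0:ℝ) < (N:ℝ)^2 := by positivity
  rw [mul_pow]
  calc (1/(N:ℝ))^2 * (∑ j, Real.sqrt (x j))^2 ≤ (1/(N:ℝ))^2 * ((N:ℝ) * ∑ j, x j) := by
        apply mul_le_mul_of_nonneg_left h (by positivity)
  _ = (1/(N:ℝ)) * ∑ j, x j := by field_simp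

set_option maxHeartbeats 1000000 in
open RealInnerProductSpace in
theorem stmt_9 {E : Type*} [NormedAddCommGroup E] [InnerProductSpace ℝ E] [CompleteSpace E]
    (N K : ℕ) (hN : 1 ≤ N) (hK : 1 ≤ K)
    (f : Fin N → E → ℝ) (hf : ∀ j, Differentiable ℝ (f j)) (L : ℝ)
    (hsmooth : ∀ (j : Fin N) (a b : E),
      ‖gradient (f j) a - gradient (f j) b‖ ≤ L * ‖a - b‖)
    (σ : ℝ)
    (hbound : ∀ θ : E, (1 / (N : ℝ)) * ∑ j, ‖gradient (f j) θ‖ ^ 2 ≤ σ ^ 2)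
    (w : Fin N → Fin K → ℝ) (hw : ∀ j k, 0 < w j k)
    (F : (Fin K → E) → ℝ)
    (hF : ∀ Θ : Fin K → E,
      F Θ = (1 / (N : ℝ)) * ∑ j, Real.log (∑ k, w j k * Real.exp (-(f j (Θ k)))))
    (η : ℝ) (hη : 0 < η) (Θ Θ' : Fin K → E)
    (hΘ' : ∀ k, Θ' k = Θ k + η • gradient (fun θ => F (Function.update Θ k θ)) (Θ k)) :
    F Θ' - F Θ ≥
      ∑ k, (η - (5 * L / 2) * η ^ 2 - (9 * σ ^ 2 / 16) * η ^ 2 - (3 * L * σ ^ 2 / 16) * η ^ 3) *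
        ‖gradient (fun θ => F (Function.update Θ k θ)) (Θ k)‖ ^ 2 := by
  rcases subsingleton_or_nontrivial E with hE | hE
  · have hΘ'Θ : Θ' = Θ := funext fun k => Subsingleton.elim _ _
    have hz : ∀ k : Fin K,
        ‖gradient (fun θ => F (Function.update Θ k θ)) (Θ k)‖ ^ 2 = 0 := by
      intro k
      rw [Subsingleton.elim (gradient (fun θ => F (Function.update Θ k θ)) (Θ k)) (0:E)]
      simp
    rw [hΘ'Θ, sub_self, Finset.sum_congr rfl (fun k _ => by rw [hz k, mul_zero])]
    simp
  obtain ⟨a₀, b₀, hab⟩ := exists_pair_ne E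
  have j₀ : Fin N := ⟨0, hN⟩
  have hL0 : 0 ≤ L := by
    have h1 := hsmooth j₀ a₀ b₀
    have h2 : 0 < ‖a₀ - b₀‖ := by rw [norm_pos_iff, sub_ne_zero]; exact hab
    nlinarith [norm_nonneg (gradient (f j₀) a₀ - gradient (f j₀) b₀)]
  have hn : (0:ℝ) < (N:ℝ) := by exact_mod_cast Nat.lt_of_lt_of_le Nat.zero_lt_one hN
  have hσ2 : (0:ℝ) ≤ σ^2 := sq_nonneg σ
  obtain ⟨g, hg⟩ : ∃ g : Fin K → E,
      g = fun k => gradient (fun θ => F (Function.update Θ k θ)) (Θ k) := ⟨_, rfl⟩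
  obtain ⟨x, hx⟩ : ∃ x : ℝ → Fin K → E, x = fun t k => Θ k + t • (η • g k) := ⟨_, rfl⟩
  obtain ⟨u, hu⟩ : ∃ u : Fin N → Fin K → ℝ → ℝ,
      u = fun j k t => w j k * Real.exp (-(f j (x t k))) := ⟨_, rfl⟩
  obtain ⟨S, hS⟩ : ∃ S : Fin N → ℝ → ℝ, S = fun j t => ∑ k, u j k t := ⟨_, rfl⟩
  obtain ⟨q, hq⟩ : ∃ q : Fin N → Fin K → ℝ → ℝ,
      q = fun j k t => ⟪gradient (f j) (x t k), g k⟫ := ⟨_, rfl⟩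
  obtain ⟨P, hP⟩ : ∃ P : Fin N → Fin K → ℝ → ℝ,
      P = fun j k t => u j k t / S j t := ⟨_, rfl⟩
  obtain ⟨S', hS'⟩ : ∃ S' : Fin N → ℝ → ℝ,
      S' = fun j t => ∑ k, u j k t * (-(η * q j k t)) := ⟨_, rfl⟩
  obtain ⟨D, hD⟩ : ∃ D : ℝ → ℝ, D = fun t => (1/(N:ℝ)) * ∑ j, (S' j t / S j t) := ⟨_, rfl⟩
  obtain ⟨R, hR⟩ : ∃ R : ℝ → ℝ,
      R = fun t => (1/(N:ℝ)) * ∑ j, ∑ k, P j k t * (-(η * q j k 0)) := ⟨_, rfl⟩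
  obtain ⟨R', hR'⟩ : ∃ R' : ℝ → ℝ, R' = fun t => (1/(N:ℝ)) * ∑ j, ∑ k,
      ((u j k t * (-(η * q j k t)) * S j t - u j k t * S' j t) / (S j t)^2) * (-(η * q j k 0))
      := ⟨_, rfl⟩
  obtain ⟨C, hC⟩ : ∃ C : Fin N → ℝ,
      C = fun j => ∑ k, (‖gradient (f j) (Θ k)‖ * ‖g k‖)^2 := ⟨_, rfl⟩
  obtain ⟨GG, hGG⟩ : ∃ GG : ℝ, GG = ∑ k, ‖g k‖^2 := ⟨_, rfl⟩
  have hGG0 : 0 ≤ GG := by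
    rw [hGG]; exact Finset.sum_nonneg fun k _ => sq_nonneg _
  -- basic facts
  have hx0 : ∀ k, x 0 k = Θ k := by
    intro k; simp only [hx, zero_smul, add_zero]
  have hx1 : ∀ k, x 1 k = Θ' k := by
    intro k
    rw [hΘ' k, hx]
    show Θ k + (1:ℝ) • η • g k = _
    rw [one_smul, hg]
  have hu_pos : ∀ j k t, 0 < u j k t := by
    intro j k t; rw [hu]; exact mul_pos (hw j k) (Real.exp_pos _)
  have hS_pos : ∀ j t, 0 < S j t := by
    intro j t; rw [hS]
    exact Finset.sum_pos (fun k _ => hu_pos j k t) ⟨⟨0, hK⟩, Finset.mem_univ _⟩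
  have hu_le_S : ∀ j k t, u j k t ≤ S j t := by
    intro j k t; rw [hS]
    exact Finset.single_le_sum (fun m _ => (hu_pos j m t).le) (Finset.mem_univ k)
  have hP0 : ∀ j k t, 0 ≤ P j k t := by
    intro j k t; rw [hP]
    exact div_nonneg (hu_pos j k t).le (hS_pos j t).le
  have hP1 : ∀ j k t, P j k t ≤ 1 := by
    intro j k t; rw [hP]
    exact div_le_one_of_le₀ (hu_le_S j k t) (hS_pos j t).le
  have hPsum : ∀ j t, ∑ k, P j k t = 1 := by
    intro j t
    have hSe : S j t = ∑ k, u j k t := by rw [hS]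
    rw [hP]
    simp only
    rw [← Finset.sum_div, ← hSe, div_self (hS_pos j t).ne']
  have hFx : ∀ t, F (x t) = (1/(N:ℝ)) * ∑ j, Real.log (S j t) := by
    intro t; rw [hF, hS, hu]
  have hgrad_f : ∀ (j : Fin N) (y : E),
      HasFDerivAt (f j) (InnerProductSpace.toDual ℝ E (gradient (f j) y)) y :=
    fun j y => hasGradientAt_iff_hasFDerivAt.1 (hf j y).hasGradientAt
  -- gradient identity
  have hgid : ∀ k, g k = ∑ j, (-(1/(N:ℝ) * P j k 0)) • gradient (f j) (Θ k) := by
    intro k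
    have hφeq : (fun θ => F (Function.update Θ k θ))
        = fun θ => (1/(N:ℝ)) * ∑ j, Real.log
            (∑ m, w j m * Real.exp (-(f j (Function.update Θ k θ m)))) :=
      funext fun θ => hF _
    have hin : ∀ j : Fin N, HasFDerivAt
        (fun θ : E => ∑ m, w j m * Real.exp (-(f j (Function.update Θ k θ m))))
        ((-(w j k * Real.exp (-(f j (Θ k))))) •
          (InnerProductSpace.toDual ℝ E (gradient (f j) (Θ k)))) (Θ k) := by
      intro j
      have hterm : ∀ m : Fin K, HasFDerivAt
          (fun θ : E => w j m * Real.exp (-(f j (Function.update Θ k θ m))))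
          (if m = k then (-(w j k * Real.exp (-(f j (Θ k))))) •
            (InnerProductSpace.toDual ℝ E (gradient (f j) (Θ k))) else 0) (Θ k) := by
        intro m
        by_cases hm : m = k
        · subst hm
          have hfun : (fun θ : E => w j m * Real.exp (-(f j (Function.update Θ m θ m))))
              = fun θ : E => w j m * Real.exp (-(f j θ)) := by
            funext θ; rw [Function.update_self]
          have h := (((hgrad_f j (Θ m)).neg).exp).const_mul (w j m)
          have hv : (w j m) • (Real.exp (-(f j (Θ m))) •
              (-(InnerProductSpace.toDual ℝ E (gradient (f j) (Θ m)))))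
              = (-(w j m * Real.exp (-(f j (Θ m))))) •
                (InnerProductSpace.toDual ℝ E (gradient (f j) (Θ m))) := by
            rw [smul_smul, smul_neg, ← neg_smul]
          rw [hfun, if_pos rfl, ← hv]
          exact h
        · have hfun : (fun θ : E => w j m * Real.exp (-(f j (Function.update Θ k θ m))))
              = fun _ : E => w j m * Real.exp (-(f j (Θ m))) := by
            funext θ; rw [Function.update_of_ne hm]
          rw [hfun, if_neg hm]
          exact hasFDerivAt_const _ _
      have hsum := HasFDerivAt.fun_sum (fun m (_ : m ∈ univ) => hterm m)
      have hite : (∑ m : Fin K, if m = k then (-(w j k * Real.exp (-(f j (Θ k))))) •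
          (InnerProductSpace.toDual ℝ E (gradient (f j) (Θ k))) else 0)
          = (-(w j k * Real.exp (-(f j (Θ k))))) •
            (InnerProductSpace.toDual ℝ E (gradient (f j) (Θ k))) := by
        rw [Finset.sum_ite_eq' univ k]
        exact if_pos (Finset.mem_univ k)
      rw [hite] at hsum
      exact hsum
    have hlog : ∀ j : Fin N, HasFDerivAt
        (fun θ : E => Real.log (∑ m, w j m * Real.exp (-(f j (Function.update Θ k θ m)))))
        ((S j 0)⁻¹ • ((-(w j k * Real.exp (-(f j (Θ k))))) •
          (InnerProductSpace.toDual ℝ E (gradient (f j) (Θ k))))) (Θ k) := by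
      intro j
      have hval : (∑ m, w j m * Real.exp (-(f j (Function.update Θ k (Θ k) m)))) = S j 0 := by
        rw [Function.update_eq_self]
        simp only [hS, hu, hx0]
      have h := (hin j).log (by rw [hval]; exact (hS_pos j 0).ne')
      rw [hval] at h
      exact h
    have hfull := (HasFDerivAt.fun_sum (fun j (_ : j ∈ univ) => hlog j)).const_mul (1/(N:ℝ))
    have hgr : HasGradientAt (fun θ => F (Function.update Θ k θ))
        (∑ j, (-(1/(N:ℝ) * P j k 0)) • gradient (f j) (Θ k)) (Θ k) := by
      rw [hφeq, hasGradientAt_iff_hasFDerivAt]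
      refine hfull.congr_fderiv (Eq.symm ?_)
      rw [map_sum, Finset.smul_sum]
      refine Finset.sum_congr rfl fun j _ => ?_
      rw [map_smul, smul_smul, smul_smul]
      congr 1
      simp only [hP, hu, hx0]
      have hSne := (hS_pos j 0).ne'
      field_simp
    rw [hg]
    exact hgr.gradient
  -- derivative of t ↦ F (x t)
  have hpath : ∀ k (t : ℝ), HasDerivAt (fun t => x t k) (η • g k) t := by
    intro k t
    have h1 : HasDerivAt (fun t:ℝ => t • (η • g k)) ((1:ℝ) • (η • g k)) t :=
      (hasDerivAt_id t).smul_const (η • g k)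
    rw [one_smul] at h1
    have h2 := h1.const_add (Θ k)
    simp only [hx]
    exact h2
  have hfd : ∀ j k t, HasDerivAt (fun t => f j (x t k)) (η * q j k t) t := by
    intro j k t
    have h := (hgrad_f j (x t k)).comp_hasDerivAt t (hpath k t)
    have he : (InnerProductSpace.toDual ℝ E (gradient (f j) (x t k))) (η • g k) = η * q j k t := by
      rw [InnerProductSpace.toDual_apply_apply, real_inner_smul_right, hq]
    rw [he] at h
    exact h
  have hu' : ∀ j k t, HasDerivAt (fun t => u j k t) (u j k t * (-(η * q j k t))) t := by
    intro j k t
    have h := (((hfd j k t).neg).exp).const_mul (w j k)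
    have hfun : (fun t => u j k t) = fun t => w j k * Real.exp (-(f j (x t k))) := by
      simp only [hu]
    have hv : u j k t * (-(η * q j k t))
        = w j k * (Real.exp (-(f j (x t k))) * -(η * q j k t)) := by
      simp only [hu]; ring
    rw [hfun, hv]
    exact h
  have hSd : ∀ j t, HasDerivAt (fun t => S j t) (S' j t) t := by
    intro j t
    rw [hS', hS]
    exact HasDerivAt.fun_sum (fun k _ => hu' j k t)
  have hDd : ∀ t, HasDerivAt (fun t => F (x t)) (D t) t := by
    intro t
    have hlog : ∀ j, HasDerivAt (fun t => Real.log (S j t)) (S' j t / S j t) t :=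
      fun j => (hSd j t).log (hS_pos j t).ne'
    have h := (HasDerivAt.fun_sum (fun j (_ : j ∈ univ) => hlog j)).const_mul (1/(N:ℝ))
    have hfe : (fun t => F (x t)) = fun t => (1/(N:ℝ)) * ∑ j, Real.log (S j t) :=
      funext hFx
    rw [hfe, hD]
    exact h
  have hRd : ∀ t, HasDerivAt R (R' t) t := by
    intro t
    rw [hR, hR']
    refine HasDerivAt.const_mul _ (HasDerivAt.fun_sum fun j _ => HasDerivAt.fun_sum fun k _ => ?_)
    have h := ((hu' j k t).div (hSd j t) (hS_pos j t).ne').mul_const (-(η * q j k 0))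
    simp only [hP]
    exact h
  -- alternative form of D
  have hD_alt : ∀ t, D t = (1/(N:ℝ)) * ∑ j, ∑ k, P j k t * (-(η * q j k t)) := by
    intro t
    simp only [hD]
    congr 1
    refine Finset.sum_congr rfl fun j _ => ?_
    simp only [hS']
    rw [Finset.sum_div]
    exact Finset.sum_congr rfl fun k _ => by simp only [hP]; ring
  -- norm identity
  have hnorm : ∀ k, ‖g k‖^2 = ∑ j, (-(1/(N:ℝ) * P j k 0)) * q j k 0 := by
    intro k
    have h1 : ‖g k‖^2 = ⟪g k, g k⟫ := (real_inner_self_eq_norm_sq (g k)).symm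
    have h2 : ∀ y : E, ⟪g k, y⟫ = ∑ j, (-(1/(N:ℝ) * P j k 0)) * ⟪gradient (f j) (Θ k), y⟫ := by
      intro y
      conv_lhs => rw [hgid k]
      rw [sum_inner]
      exact Finset.sum_congr rfl fun j _ => real_inner_smul_left _ _ _
    rw [h1, h2 (g k)]
    refine Finset.sum_congr rfl fun j _ => ?_
    simp only [hq, hx0]
  have hD0 : D 0 = η * GG := by
    calc D 0 = ∑ j, ∑ k, (1/(N:ℝ)) * (P j k 0 * (-(η * q j k 0))) := by
          rw [hD_alt 0, Finset.mul_sum]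
          exact Finset.sum_congr rfl fun j _ => Finset.mul_sum _ _ _
    _ = ∑ k, ∑ j, (1/(N:ℝ)) * (P j k 0 * (-(η * q j k 0))) := Finset.sum_comm
    _ = ∑ k, η * ∑ j, (-(1/(N:ℝ) * P j k 0)) * q j k 0 := by
          refine Finset.sum_congr rfl fun k _ => ?_
          rw [Finset.mul_sum]
          exact Finset.sum_congr rfl fun j _ => by ring
    _ = η * ∑ k, ‖g k‖^2 := by
          rw [← Finset.mul_sum]
          exact congrArg _ (Finset.sum_congr rfl fun k _ => (hnorm k).symm)
    _ = η * GG := by rw [hGG]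
  have hR0 : R 0 = D 0 := by
    simp only [hR, hD_alt 0]
  -- pointwise bounds
  have hxdiff : ∀ k (t:ℝ), 0 ≤ t → ‖x t k - Θ k‖ = t * (η * ‖g k‖) := by
    intro k t ht
    have : x t k - Θ k = t • (η • g k) := by
      simp only [hx]; exact add_sub_cancel_left _ _
    rw [this, norm_smul, norm_smul, Real.norm_eq_abs, abs_of_nonneg ht,
      Real.norm_eq_abs, abs_of_nonneg hη.le]
  have hgradx : ∀ j k (t:ℝ), 0 ≤ t →
      ‖gradient (f j) (x t k)‖ ≤ ‖gradient (f j) (Θ k)‖ + L*t*η*‖g k‖ := by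
    intro j k t ht
    have h := hsmooth j (x t k) (Θ k)
    rw [hxdiff k t ht] at h
    have h2 := norm_sub_norm_le (gradient (f j) (x t k)) (gradient (f j) (Θ k))
    nlinarith
  have hqb : ∀ j k (t:ℝ), 0 ≤ t →
      |q j k t| ≤ ‖gradient (f j) (Θ k)‖ * ‖g k‖ + L*t*η*‖g k‖^2 := by
    intro j k t ht
    have h1 : |q j k t| ≤ ‖gradient (f j) (x t k)‖ * ‖g k‖ := by
      simp only [hq]; exact abs_real_inner_le_norm _ _
    have h2 := hgradx j k t ht
    nlinarith [norm_nonneg (g k)]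
  have hqdiff : ∀ j k (t:ℝ), 0 ≤ t → |q j k t - q j k 0| ≤ L*t*η*‖g k‖^2 := by
    intro j k t ht
    have h1 : q j k t - q j k 0 = ⟪gradient (f j) (x t k) - gradient (f j) (Θ k), g k⟫ := by
      simp only [hq, hx0]
      rw [inner_sub_left]
    have h2 := abs_real_inner_le_norm (gradient (f j) (x t k) - gradient (f j) (Θ k)) (g k)
    have h3 := hsmooth j (x t k) (Θ k)
    rw [hxdiff k t ht] at h3
    rw [h1]
    nlinarith [h2, h3, mul_le_mul_of_nonneg_right h3 (norm_nonneg (g k))]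
  -- GG ≤ σ²
  have hgk2 : ∀ k, ‖g k‖^2 ≤ (∑ j, (1/(N:ℝ) * P j k 0)) * σ^2 := by
    intro k
    have hgn : ‖g k‖ ≤ ∑ j, (1/(N:ℝ) * P j k 0) * ‖gradient (f j) (Θ k)‖ := by
      rw [hgid k]
      calc ‖∑ j, (-(1/(N:ℝ) * P j k 0)) • gradient (f j) (Θ k)‖
          ≤ ∑ j, ‖(-(1/(N:ℝ) * P j k 0)) • gradient (f j) (Θ k)‖ := norm_sum_le _ _
      _ = ∑ j, (1/(N:ℝ) * P j k 0) * ‖gradient (f j) (Θ k)‖ := by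
          refine Finset.sum_congr rfl fun j _ => ?_
          rw [norm_smul, Real.norm_eq_abs, abs_neg,
            abs_of_nonneg (mul_nonneg (by positivity) (hP0 j k 0))]
    have hcs := Finset.sum_mul_sq_le_sq_mul_sq univ
      (fun j => Real.sqrt (1/(N:ℝ) * P j k 0))
      (fun j => Real.sqrt (1/(N:ℝ) * P j k 0) * ‖gradient (f j) (Θ k)‖)
    have hnn : ∀ j : Fin N, (0:ℝ) ≤ 1/(N:ℝ) * P j k 0 := fun j =>
      mul_nonneg (by positivity) (hP0 j k 0)
    have e1 : ∀ j ∈ univ, Real.sqrt (1/(N:ℝ) * P j k 0) *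
        (Real.sqrt (1/(N:ℝ) * P j k 0) * ‖gradient (f j) (Θ k)‖)
        = (1/(N:ℝ) * P j k 0) * ‖gradient (f j) (Θ k)‖ := fun j _ => by
      rw [← mul_assoc, Real.mul_self_sqrt (hnn j)]
    have e2 : ∀ j ∈ univ, (Real.sqrt (1/(N:ℝ) * P j k 0))^2 = 1/(N:ℝ) * P j k 0 :=
      fun j _ => Real.sq_sqrt (hnn j)
    have e3 : ∀ j ∈ univ, (Real.sqrt (1/(N:ℝ) * P j k 0) * ‖gradient (f j) (Θ k)‖)^2
        = (1/(N:ℝ) * P j k 0) * ‖gradient (f j) (Θ k)‖^2 := fun j _ => by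
      rw [mul_pow, Real.sq_sqrt (hnn j)]
    rw [Finset.sum_congr rfl e1, Finset.sum_congr rfl e2, Finset.sum_congr rfl e3] at hcs
    have hb : ∑ j, (1/(N:ℝ) * P j k 0) * ‖gradient (f j) (Θ k)‖^2 ≤ σ^2 := by
      calc ∑ j, (1/(N:ℝ) * P j k 0) * ‖gradient (f j) (Θ k)‖^2
          ≤ ∑ j, (1/(N:ℝ)) * ‖gradient (f j) (Θ k)‖^2 := by
            refine Finset.sum_le_sum fun j _ => ?_
            have := hP1 j k 0
            have h0 := hP0 j k 0
            have hd2 : (0:ℝ) ≤ ‖gradient (f j) (Θ k)‖^2 := sq_nonneg _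
            have h1N : (0:ℝ) ≤ 1/(N:ℝ) := by positivity
            nlinarith [mul_nonneg h1N hd2, mul_nonneg (mul_nonneg h1N h0) hd2,
              mul_le_mul_of_nonneg_left (mul_le_of_le_one_left hd2 this) h1N]
      _ = (1/(N:ℝ)) * ∑ j, ‖gradient (f j) (Θ k)‖^2 := (Finset.mul_sum _ _ _).symm
      _ ≤ σ^2 := hbound (Θ k)
    have hgs : ‖g k‖^2 ≤ (∑ j, (1/(N:ℝ) * P j k 0) * ‖gradient (f j) (Θ k)‖)^2 := by
      have := pow_le_pow_left₀ (norm_nonneg (g k)) hgn 2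
      exact this
    have hsp : (0:ℝ) ≤ ∑ j, (1/(N:ℝ) * P j k 0) := Finset.sum_nonneg fun j _ => hnn j
    calc ‖g k‖^2 ≤ (∑ j, (1/(N:ℝ) * P j k 0) * ‖gradient (f j) (Θ k)‖)^2 := hgs
    _ ≤ (∑ j, (1/(N:ℝ) * P j k 0)) * ∑ j, (1/(N:ℝ) * P j k 0) * ‖gradient (f j) (Θ k)‖^2 := hcs
    _ ≤ (∑ j, (1/(N:ℝ) * P j k 0)) * σ^2 := mul_le_mul_of_nonneg_left hb hsp
  have hGGσ : GG ≤ σ^2 := by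
    have hsumP : ∑ k, ∑ j, (1/(N:ℝ) * P j k 0) = 1 := by
      rw [Finset.sum_comm]
      have : ∀ j ∈ univ, ∑ k, (1/(N:ℝ) * P j k 0) = 1/(N:ℝ) := fun j _ => by
        rw [← Finset.mul_sum, hPsum j 0, mul_one]
      rw [Finset.sum_congr rfl this, Finset.sum_const, card_univ, Fintype.card_fin,
        nsmul_eq_mul]
      field_simp
    calc GG = ∑ k, ‖g k‖^2 := hGG
    _ ≤ ∑ k, (∑ j, (1/(N:ℝ) * P j k 0)) * σ^2 := Finset.sum_le_sum fun k _ => hgk2 k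
    _ = (∑ k, ∑ j, (1/(N:ℝ) * P j k 0)) * σ^2 := by rw [Finset.sum_mul]
    _ = σ^2 := by rw [hsumP, one_mul]
  -- average of C bound
  have hCavg : (1/(N:ℝ)) * ∑ j, C j ≤ σ^2 * GG := by
    have h1 : (1/(N:ℝ)) * ∑ j, C j
        = ∑ k, ‖g k‖^2 * ((1/(N:ℝ)) * ∑ j, ‖gradient (f j) (Θ k)‖^2) := by
      simp only [hC]
      rw [Finset.sum_comm, Finset.mul_sum]
      refine Finset.sum_congr rfl fun k _ => ?_
      calc (1/(N:ℝ)) * ∑ j, (‖gradient (f j) (Θ k)‖ * ‖g k‖)^2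
          = ∑ j, ‖g k‖^2 * ((1/(N:ℝ)) * ‖gradient (f j) (Θ k)‖^2) := by
            rw [Finset.mul_sum]; exact Finset.sum_congr rfl fun j _ => by ring
      _ = ‖g k‖^2 * ((1/(N:ℝ)) * ∑ j, ‖gradient (f j) (Θ k)‖^2) := by
            rw [← Finset.mul_sum, ← Finset.mul_sum]
    rw [h1]
    calc ∑ k, ‖g k‖^2 * ((1/(N:ℝ)) * ∑ j, ‖gradient (f j) (Θ k)‖^2)
        ≤ ∑ k, ‖g k‖^2 * σ^2 := Finset.sum_le_sum fun k _ =>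
          mul_le_mul_of_nonneg_left (hbound (Θ k)) (sq_nonneg _)
    _ = σ^2 * GG := by rw [← Finset.sum_mul, ← hGG, mul_comm]
  have hC0 : ∀ j, 0 ≤ C j := by
    intro j; rw [hC]; exact Finset.sum_nonneg fun k _ => sq_nonneg _
  -- R' bound
  have hRb : ∀ s ∈ Set.Icc (0:ℝ) 1, |R' s| ≤ η^2*σ^2*GG + L*η^3*σ^2*GG*s := by
    intro s hs
    have hs0 : (0:ℝ) ≤ s := hs.1
    obtain ⟨T, hT⟩ : ∃ T : Fin N → ℝ, T = fun j => ∑ k,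
        ((u j k s * (-(η * q j k s)) * S j s - u j k s * S' j s) / (S j s)^2) *
          (-(η * q j k 0)) := ⟨_, rfl⟩
    have hR'T : R' s = (1/(N:ℝ)) * ∑ j, T j := by simp only [hR', hT]
    have hTj : ∀ j, T j = η^2 * ((∑ k, P j k s * q j k 0 * q j k s)
        - (∑ k, P j k s * q j k 0) * (∑ k, P j k s * q j k s)) := by
      intro j
      have hSne := (hS_pos j s).ne'
      have hSS : S' j s / S j s = -η * ∑ k, P j k s * q j k s := by
        simp only [hS']
        rw [Finset.sum_div, Finset.mul_sum]
        refine Finset.sum_congr rfl fun k _ => ?_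
        simp only [hP]
        ring
      have hterm : ∀ k ∈ univ, ((u j k s * (-(η * q j k s)) * S j s - u j k s * S' j s) /
          (S j s)^2) * (-(η * q j k 0))
          = η^2 * (P j k s * q j k 0 * q j k s)
            + (η * q j k 0) * (P j k s * (S' j s / S j s)) := by
        intro k _
        simp only [hP]
        field_simp
        ring
      have h2 : ∑ k, (η * q j k 0) * (P j k s * (S' j s / S j s))
          = (S' j s / S j s) * (η * ∑ k, P j k s * q j k 0) := by
        rw [Finset.mul_sum, Finset.mul_sum]
        exact Finset.sum_congr rfl fun k _ => by ring
      simp only [hT]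
      rw [Finset.sum_congr rfl hterm, Finset.sum_add_distrib, ← Finset.mul_sum, h2, hSS]
      ring
    have hq0b : ∀ j k, |q j k 0| ≤ ‖gradient (f j) (Θ k)‖ * ‖g k‖ := by
      intro j k
      have h := hqb j k 0 le_rfl
      have e : L*0*η*‖g k‖^2 = 0 := by ring
      linarith [e ▸ h]
    have hq02 : ∀ j, ∑ k, (q j k 0)^2 ≤ C j := by
      intro j
      rw [hC]
      refine Finset.sum_le_sum fun k _ => ?_
      rw [← sq_abs (q j k 0)]
      exact pow_le_pow_left₀ (abs_nonneg _) (hq0b j k) 2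
    have hsqrt0 : ∀ j, Real.sqrt (∑ k, (q j k 0)^2) ≤ Real.sqrt (C j) :=
      fun j => Real.sqrt_le_sqrt (hq02 j)
    have hsqC0 : ∀ j, (0:ℝ) ≤ Real.sqrt (C j) := fun j => Real.sqrt_nonneg _
    have hsqrts : ∀ j, Real.sqrt (∑ k, (q j k s)^2) ≤ Real.sqrt (C j) + L*s*η*GG := by
      intro j
      have h1 : ∀ k, (q j k s)^2
          ≤ (‖gradient (f j) (Θ k)‖ * ‖g k‖ + L*s*η*‖g k‖^2)^2 := by
        intro k
        have hb := hqb j k s hs0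
        rw [← sq_abs (q j k s)]
        exact pow_le_pow_left₀ (abs_nonneg _) hb 2
      have h2 : Real.sqrt (∑ k, (q j k s)^2)
          ≤ Real.sqrt (∑ k, (‖gradient (f j) (Θ k)‖ * ‖g k‖ + L*s*η*‖g k‖^2)^2) :=
        Real.sqrt_le_sqrt (Finset.sum_le_sum fun k _ => h1 k)
      have h3 := aux_mink (fun k => ‖gradient (f j) (Θ k)‖ * ‖g k‖)
        (fun k => L*s*η*‖g k‖^2)
        (fun k => mul_nonneg (norm_nonneg _) (norm_nonneg _))
        (fun k => mul_nonneg (mul_nonneg (mul_nonneg hL0 hs0) hη.le) (sq_nonneg _))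
      have h4 : Real.sqrt (∑ k, (L*s*η*‖g k‖^2)^2) ≤ L*s*η*GG := by
        have e : ∑ k, (L*s*η*‖g k‖^2)^2 = (L*s*η)^2 * ∑ k, (‖g k‖^2)^2 := by
          rw [Finset.mul_sum]; exact Finset.sum_congr rfl fun k _ => by ring
        rw [e, Real.sqrt_mul (sq_nonneg _),
          Real.sqrt_sq (mul_nonneg (mul_nonneg hL0 hs0) hη.le)]
        have h5 : ∑ k, (‖g k‖^2)^2 ≤ GG^2 := by
          rw [hGG]; exact Finset.sum_sq_le_sq_sum_of_nonneg fun k _ => sq_nonneg _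
        have h6 : Real.sqrt (∑ k, (‖g k‖^2)^2) ≤ GG := by
          calc Real.sqrt (∑ k, (‖g k‖^2)^2) ≤ Real.sqrt (GG^2) := Real.sqrt_le_sqrt h5
          _ = GG := Real.sqrt_sq hGG0
        exact mul_le_mul_of_nonneg_left h6 (mul_nonneg (mul_nonneg hL0 hs0) hη.le)
      have hCval : Real.sqrt (∑ k, (‖gradient (f j) (Θ k)‖ * ‖g k‖)^2)
          = Real.sqrt (C j) := by rw [hC]
      calc Real.sqrt (∑ k, (q j k s)^2)
          ≤ Real.sqrt (∑ k, (‖gradient (f j) (Θ k)‖ * ‖g k‖ + L*s*η*‖g k‖^2)^2) := h2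
      _ ≤ Real.sqrt (∑ k, (‖gradient (f j) (Θ k)‖ * ‖g k‖)^2)
            + Real.sqrt (∑ k, (L*s*η*‖g k‖^2)^2) := h3
      _ ≤ Real.sqrt (C j) + L*s*η*GG := by rw [hCval]; linarith [h4]
    have hTb : ∀ j, |T j| ≤ η^2 * C j + L*s*η^3*GG*Real.sqrt (C j) := by
      intro j
      rw [hTj j, abs_mul, abs_of_nonneg (sq_nonneg η)]
      have hcov := aux_cov (fun k => P j k s) (fun k => q j k 0) (fun k => q j k s)
        (fun k => hP0 j k s) (fun k => hP1 j k s) (hPsum j s)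
      have hb := mul_le_mul (hsqrt0 j) (hsqrts j) (Real.sqrt_nonneg _) (hsqC0 j)
      have e := Real.mul_self_sqrt (hC0 j)
      calc η^2 * |(∑ k, P j k s * q j k 0 * q j k s)
            - (∑ k, P j k s * q j k 0) * (∑ k, P j k s * q j k s)|
          ≤ η^2 * (Real.sqrt (∑ k, (q j k 0)^2) * Real.sqrt (∑ k, (q j k s)^2)) :=
            mul_le_mul_of_nonneg_left hcov (sq_nonneg η)
      _ ≤ η^2 * (Real.sqrt (C j) * (Real.sqrt (C j) + L*s*η*GG)) :=
            mul_le_mul_of_nonneg_left hb (sq_nonneg η)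
      _ = η^2 * (Real.sqrt (C j) * Real.sqrt (C j))
            + η^2 * (Real.sqrt (C j) * (L*s*η*GG)) := by ring
      _ = η^2 * C j + L*s*η^3*GG*Real.sqrt (C j) := by rw [e]; ring
    have hsum : |R' s| ≤ (1/(N:ℝ)) * ∑ j, |T j| := by
      rw [hR'T, abs_mul, abs_of_nonneg (by positivity : (0:ℝ) ≤ 1/(N:ℝ))]
      exact mul_le_mul_of_nonneg_left (Finset.abs_sum_le_sum_abs _ _) (by positivity)
    have h1N : (0:ℝ) ≤ 1/(N:ℝ) := by positivity
    have h7 : (1/(N:ℝ)) * ∑ j, |T j|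
        ≤ η^2*((1/(N:ℝ))*∑ j, C j) + L*s*η^3*GG*((1/(N:ℝ))*∑ j, Real.sqrt (C j)) := by
      have h7a := Finset.sum_le_sum (fun j (_ : j ∈ univ) => hTb j)
      rw [Finset.sum_add_distrib, ← Finset.mul_sum, ← Finset.mul_sum] at h7a
      calc (1/(N:ℝ)) * ∑ j, |T j|
          ≤ (1/(N:ℝ)) * (η^2 * ∑ j, C j + L*s*η^3*GG * ∑ j, Real.sqrt (C j)) :=
            mul_le_mul_of_nonneg_left h7a h1N
      _ = η^2*((1/(N:ℝ))*∑ j, C j) + L*s*η^3*GG*((1/(N:ℝ))*∑ j, Real.sqrt (C j)) := by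
            ring
    have h8 : (1/(N:ℝ)) * ∑ j, Real.sqrt (C j) ≤ σ^2 := by
      have h9 := aux_avg_sqrt C (fun j => hC0 j) hn
      have h10 : Real.sqrt ((1/(N:ℝ)) * ∑ j, C j) ≤ Real.sqrt (σ^2 * GG) :=
        Real.sqrt_le_sqrt hCavg
      have h11 : Real.sqrt (σ^2*GG) ≤ Real.sqrt (σ^2*σ^2) :=
        Real.sqrt_le_sqrt (mul_le_mul_of_nonneg_left hGGσ hσ2)
      have h12 : Real.sqrt (σ^2*σ^2) = σ^2 := Real.sqrt_mul_self hσ2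
      linarith
    have h13 : η^2*((1/(N:ℝ))*∑ j, C j) ≤ η^2*(σ^2*GG) :=
      mul_le_mul_of_nonneg_left hCavg (sq_nonneg η)
    have hLs : (0:ℝ) ≤ L*s*η^3*GG :=
      mul_nonneg (mul_nonneg (mul_nonneg hL0 hs0) (by positivity)) hGG0
    have h14 : L*s*η^3*GG*((1/(N:ℝ))*∑ j, Real.sqrt (C j)) ≤ L*s*η^3*GG*σ^2 :=
      mul_le_mul_of_nonneg_left h8 hLs
    have hfin : η^2*(σ^2*GG) + L*s*η^3*GG*σ^2 = η^2*σ^2*GG + L*η^3*σ^2*GG*s := by ring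
    linarith
  -- D - R bound
  have hDR : ∀ t ∈ Set.Icc (0:ℝ) 1, -(L*η^2*GG*t) ≤ D t - R t := by
    intro t ht
    have hsplit : D t - R t
        = (1/(N:ℝ)) * ∑ j, ∑ k, P j k t * (-(η * (q j k t - q j k 0))) := by
      rw [hD_alt t]
      simp only [hR]
      rw [← mul_sub, ← Finset.sum_sub_distrib]
      congr 1
      refine Finset.sum_congr rfl fun j _ => ?_
      rw [← Finset.sum_sub_distrib]
      exact Finset.sum_congr rfl fun k _ => by ring
    rw [hsplit]
    have hterm : ∀ (j : Fin N) (k : Fin K),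
        -(L*t*η^2*‖g k‖^2) ≤ P j k t * (-(η * (q j k t - q j k 0))) := by
      intro j k
      have h1 := hqdiff j k t ht.1
      have hP' : |P j k t| ≤ 1 := by
        rw [abs_of_nonneg (hP0 j k t)]; exact hP1 j k t
      have h2 : |P j k t * (-(η * (q j k t - q j k 0)))| ≤ η * (L*t*η*‖g k‖^2) := by
        rw [abs_mul, abs_neg, abs_mul, abs_of_nonneg hη.le]
        have h3 : |P j k t| * (η * |q j k t - q j k 0|) ≤ 1 * (η * (L*t*η*‖g k‖^2)) :=
          mul_le_mul hP' (mul_le_mul_of_nonneg_left h1 hη.le) (by positivity) zero_le_one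
        linarith
      have h4 := neg_abs_le (P j k t * (-(η * (q j k t - q j k 0))))
      nlinarith
    have hsumk : ∀ j ∈ univ, -(L*t*η^2*GG) ≤ ∑ k, P j k t * (-(η * (q j k t - q j k 0))) := by
      intro j _
      have h5 := Finset.sum_le_sum (fun k (_ : k ∈ univ) => hterm j k)
      have e : ∑ k : Fin K, -(L*t*η^2*‖g k‖^2) = -(L*t*η^2*GG) := by
        rw [hGG, Finset.mul_sum, ← Finset.sum_neg_distrib]
      linarith [e ▸ h5]
    have h6 := Finset.sum_le_sum hsumk
    rw [Finset.sum_const, card_univ, Fintype.card_fin, nsmul_eq_mul] at h6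
    have h7 := mul_le_mul_of_nonneg_left h6 (by positivity : (0:ℝ) ≤ 1/(N:ℝ))
    have h8 : (1/(N:ℝ)) * ((N:ℝ) * -(L*t*η^2*GG)) = -(L*t*η^2*GG) := by
      field_simp
    rw [h8] at h7
    have h9 : -(L*η^2*GG*t) = -(L*t*η^2*GG) := by ring
    linarith
  -- R increment bound
  have hRincr : ∀ t ∈ Set.Icc (0:ℝ) 1,
      (-(η^2*σ^2*GG))*t - (L*η^3*σ^2*GG)*t^2/2 - 0*t^3/3 ≤ R t - R 0 := by
    intro t ht
    refine aux_descent R R' hRd t (-(η^2*σ^2*GG)) (L*η^3*σ^2*GG) 0 ht.1 ?_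
    intro s hs
    have hs1 : s ∈ Set.Icc (0:ℝ) 1 := ⟨hs.1, le_trans hs.2 ht.2⟩
    have h := hRb s hs1
    have h2 := neg_abs_le (R' s)
    linarith [h2, h, mul_nonneg (mul_nonneg (mul_nonneg hL0 (by positivity : (0:ℝ) ≤ η^3)) hσ2) hGG0]
  -- lower bound on D
  have hDlow : ∀ t ∈ Set.Icc (0:ℝ) 1,
      η*GG - (L*η^2*GG + η^2*σ^2*GG)*t - (L*η^3*σ^2*GG/2)*t^2 ≤ D t := by
    intro t ht
    have h1 := hDR t ht
    have h2 := hRincr t ht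
    have h3 : D t = (D t - R t) + (R t - R 0) + R 0 := by ring
    rw [h3, hR0, hD0]
    nlinarith
  -- final application
  have hfin := aux_descent (fun t => F (x t)) D hDd 1 (η*GG)
    (L*η^2*GG + η^2*σ^2*GG) (L*η^3*σ^2*GG/2) zero_le_one hDlow
  have hx1' : x 1 = Θ' := funext hx1
  have hx0' : x 0 = Θ := funext hx0
  simp only [hx1', hx0'] at hfin
  have hgoal : F Θ' - F Θ ≥
      ∑ k, (η - (5 * L / 2) * η ^ 2 - (9 * σ ^ 2 / 16) * η ^ 2 - (3 * L * σ ^ 2 / 16) * η ^ 3)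
        * ‖g k‖ ^ 2 := by
    rw [← Finset.mul_sum, ← hGG]
    have hη2 : (0:ℝ) ≤ η^2 := sq_nonneg η
    have hη3 : (0:ℝ) ≤ η^3 := by positivity
    nlinarith [mul_nonneg (mul_nonneg hL0 hη2) hGG0,
      mul_nonneg (mul_nonneg hσ2 hη2) hGG0,
      mul_nonneg (mul_nonneg (mul_nonneg hL0 hσ2) hη3) hGG0]
  simpa only [hg] using hgoal
end
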